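/- arXiv:1101.2236 — 6 statements merged into one kernel-verified Lean document; each statement's English description precedes it below -/
import Mathlib

section
/- If γ* = log Φ where Φ(t,x) = Σ_{d≥0} (∏_{i=1}^d 1/(1−it)) · ((-1)^d/d!) · (x/t)^d, then γ* satisfies the PDE −t²x·γ*_{xx} = t²x·(γ*_x)² + t²·γ*_x − t·γ*_x − 1, where subscripts denote partial derivatives in x. -/
open PowerSeries

/-- `Φ(t,x) = Σ_{d≥0} (∏_{i=1}^d 1/(1-it)) · ((-1)^d/d!) · (x/t)^d` over `ℚ(t)`. -/
noncomputable def phi : PowerSeries (RatFunc ℚ) :=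
  PowerSeries.mk fun d =>
    (∏ i ∈ Finset.range d, (1 - ((i : RatFunc ℚ) + 1) * RatFunc.X)⁻¹) *
      ((-1) ^ d / ((d.factorial : RatFunc ℚ) * RatFunc.X ^ d))

/-- `log(1+x) = Σ_{n≥1} (-1)^{n-1} x^n / n`. -/
noncomputable def logOneAdd : PowerSeries (RatFunc ℚ) :=
  PowerSeries.mk fun n => if n = 0 then 0 else (-1) ^ (n - 1) / (n : RatFunc ℚ)

/-- Composition `f ∘ g` of formal power series (the correct composition whenever the
constant term of `g` vanishes). -/
noncomputable def comp (f g : PowerSeries (RatFunc ℚ)) : PowerSeries (RatFunc ℚ) :=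
  PowerSeries.mk fun n =>
    ∑ k ∈ Finset.range (n + 1),
      PowerSeries.coeff k f * PowerSeries.coeff n (g ^ k)

/-- `γ* = log Φ`. -/
noncomputable def gammaStar : PowerSeries (RatFunc ℚ) := comp logOneAdd (phi - 1)

abbrev K := RatFunc ℚ

instance : CharZero K := charZero_of_injective_algebraMap (RatFunc.algebraMap_injective ℚ)

lemma coeff_comp (f g : PowerSeries K) (n : ℕ) :
    coeff n (comp f g) =
      ∑ k ∈ Finset.range (n + 1), coeff k f * coeff n (g ^ k) := by
  simp [comp]

lemma coeff_pow_zero {g : PowerSeries K} (hg : constantCoeff g = 0) {n k : ℕ}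
    (h : n < k) : coeff n (g ^ k) = 0 := by
  have : (X : PowerSeries K) ^ k ∣ g ^ k :=
    pow_dvd_pow_of_dvd (PowerSeries.X_dvd_iff.2 hg) k
  exact (PowerSeries.X_pow_dvd_iff.1 this) n h

lemma chain (f g : PowerSeries K) (hg : constantCoeff g = 0) :
    PowerSeries.derivative K (comp f g) =
      comp (PowerSeries.derivative K f) g * PowerSeries.derivative K g := by
  ext n
  have key : ∀ s : PowerSeries K, coeff n s = coeff n s := fun _ => rfl
  rw [coeff_derivative, coeff_comp]
  have LHS : (∑ k ∈ Finset.range (n + 1 + 1), coeff k f * coeff (n+1) (g ^ k)) * (n+1 : K)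
      = ∑ j ∈ Finset.range (n + 1),
          coeff (j+1) f * ((j+1 : K) * coeff n (g ^ j * PowerSeries.derivative K g)) := by
    rw [Finset.sum_mul]
    have e1 : ∀ k, coeff k f * coeff (n+1) (g ^ k) * (n+1 : K)
        = coeff k f * coeff n (PowerSeries.derivative K (g ^ k)) := by
      intro k
      rw [coeff_derivative]; ring
    simp_rw [e1]
    rw [Finset.sum_range_succ']
    have e0 : coeff 0 f * coeff n (PowerSeries.derivative K (g ^ 0)) = 0 := by
      simp
    rw [e0, add_zero]
    refine Finset.sum_congr rfl fun j _ => ?_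
    rw [Derivation.leibniz_pow, Nat.add_sub_cancel, map_nsmul, nsmul_eq_mul, smul_eq_mul]
    push_cast
    ring
  rw [LHS, PowerSeries.coeff_mul, Finset.Nat.sum_antidiagonal_eq_sum_range_succ_mk]
  have RHS : ∀ a ∈ Finset.range (n+1),
      coeff a (comp (PowerSeries.derivative K f) g) * coeff (n - a) (PowerSeries.derivative K g)
      = ∑ j ∈ Finset.range (n+1),
          coeff (j+1) f * (j+1 : K) * (coeff a (g ^ j) * coeff (n - a) (PowerSeries.derivative K g)) := by
    intro a ha
    rw [coeff_comp]
    have hsub : Finset.range (a+1) ⊆ Finset.range (n+1) := by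
      apply Finset.range_subset_range.2
      have := Finset.mem_range.1 ha
      omega
    rw [← Finset.sum_subset hsub (fun j _ hj => by
      have : a < j := by simp at hj; omega
      simp [coeff_pow_zero hg this])]
    rw [Finset.sum_mul]
    refine Finset.sum_congr rfl fun j _ => ?_
    rw [coeff_derivative]; ring
  rw [Finset.sum_congr rfl RHS, Finset.sum_comm]
  refine Finset.sum_congr rfl fun j _ => ?_
  rw [← Finset.mul_sum, PowerSeries.coeff_mul, Finset.Nat.sum_antidiagonal_eq_sum_range_succ_mk]
  ring

noncomputable def invOneAdd : PowerSeries K := PowerSeries.mk fun n => (-1) ^ n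

lemma deriv_logOneAdd : PowerSeries.derivative K logOneAdd = invOneAdd := by
  ext n
  rw [coeff_derivative]
  simp only [logOneAdd, invOneAdd, coeff_mk, Nat.add_eq_zero, if_neg (by omega : ¬(n + 1 = 0))]
  have h : ((n : K) + 1) ≠ 0 := by
    have : ((n+1 : ℕ) : K) ≠ 0 := Nat.cast_ne_zero.2 (by omega)
    push_cast at this; exact this
  simp only [Nat.add_sub_cancel]
  push_cast
  rw [if_neg (by simp)]
  field_simp

lemma geom_inv {g : PowerSeries K} (hg : constantCoeff g = 0) :
    (1 + g) * comp invOneAdd g = 1 := by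
  ext n
  rw [PowerSeries.coeff_mul, Finset.Nat.sum_antidiagonal_eq_sum_range_succ_mk]
  have hU : ∀ b ≤ n, coeff b (comp invOneAdd g)
      = coeff b (∑ k ∈ Finset.range (n+1), (-1 : PowerSeries K) ^ k * g ^ k) := by
    intro b hb
    rw [coeff_comp]
    rw [map_sum]
    have hsub : Finset.range (b+1) ⊆ Finset.range (n+1) := Finset.range_subset_range.2 (by omega)
    rw [← Finset.sum_subset hsub (fun j _ hj => by
      have h1 : b < j := by simp only [Finset.mem_range, not_lt] at hj; omega
      rw [show ((-1 : PowerSeries K) ^ j * g ^ j) = PowerSeries.C ((-1 : K)^j) * g ^ j by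
        simp [map_pow], PowerSeries.coeff_C_mul, coeff_pow_zero hg h1, mul_zero])]
    refine Finset.sum_congr rfl fun j _ => ?_
    simp only [invOneAdd, coeff_mk]
    rw [show ((-1 : PowerSeries K) ^ j * g ^ j) = PowerSeries.C ((-1 : K)^j) * g ^ j by
      simp [map_pow], PowerSeries.coeff_C_mul]
  have := fun a (ha : a ∈ Finset.range (n+1)) => by
    have hb : n - a ≤ n := Nat.sub_le n a
    exact congrArg (fun z => coeff a (1 + g) * z) (hU (n - a) hb)
  rw [Finset.sum_congr rfl this]
  have : ∑ a ∈ Finset.range (n+1), coeff a (1 + g) *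
      coeff (n - a) (∑ k ∈ Finset.range (n+1), (-1 : PowerSeries K) ^ k * g ^ k)
      = coeff n ((1 + g) * ∑ k ∈ Finset.range (n+1), (-1 : PowerSeries K) ^ k * g ^ k) := by
    rw [PowerSeries.coeff_mul, Finset.Nat.sum_antidiagonal_eq_sum_range_succ_mk]
  rw [this]
  have hgeom : (1 + g) * ∑ k ∈ Finset.range (n+1), (-1 : PowerSeries K) ^ k * g ^ k
      = 1 - (-g) ^ (n+1) := by
    have := geom_sum_mul (-g) (n+1)
    have h2 : ∀ k, (-1 : PowerSeries K) ^ k * g ^ k = (-g) ^ k := fun k => by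
      rw [neg_pow]; ring
    simp_rw [h2]
    linear_combination -this
  rw [hgeom, map_sub]
  have : coeff n ((-g) ^ (n+1)) = 0 := by
    rw [neg_pow]
    rw [show coeff n ((-1 : PowerSeries K) ^ (n+1) * g ^ (n+1)) = _ from rfl]
    rw [show ((-1 : PowerSeries K) ^ (n+1)) = PowerSeries.C ((-1 : K)^(n+1)) by simp [map_pow]]
    rw [PowerSeries.coeff_C_mul, coeff_pow_zero hg (by omega), mul_zero]
  rw [this, sub_zero]

lemma tX_ne_zero : (RatFunc.X : RatFunc ℚ) ≠ 0 := RatFunc.X_ne_zero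

lemma one_sub_ne_zero (c : ℚ) (hc : c ≠ 0) : (1 - (c : K) * RatFunc.X) ≠ 0 := by
  have : (1 - (c : K) * RatFunc.X)
      = algebraMap (Polynomial ℚ) (RatFunc ℚ) (1 - Polynomial.C c * Polynomial.X) := by
    simp [map_sub, map_mul, RatFunc.algebraMap_C]
  rw [this]
  apply RatFunc.algebraMap_ne_zero
  intro h
  have := congrArg (fun q => Polynomial.coeff q 1) h
  simp [Polynomial.coeff_one] at this
  exact hc this

lemma scalar_rec (n : ℕ) :
    coeff n phi = ((n : K) + 1) * coeff (n + 1) phi *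
      ((RatFunc.X ^ 2 - RatFunc.X) + (n : K) * RatFunc.X ^ 2) := by
  simp only [phi, coeff_mk]
  rw [Finset.prod_range_succ]
  have ht := tX_ne_zero
  have hf : ((n.factorial : K)) ≠ 0 := Nat.cast_ne_zero.2 n.factorial_ne_zero
  have hn1 : ((n : K) + 1) ≠ 0 := Nat.cast_add_one_ne_zero n
  have hq : ((n : ℚ) + 1) ≠ 0 := by positivity
  have hd' : (1 - ((n : K) + 1) * RatFunc.X) ≠ 0 := by
    have := one_sub_ne_zero ((n:ℚ)+1) hq
    push_cast at this
    exact this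
  have hP : (∏ x ∈ Finset.range n, (1 - ((x : K) + 1) * RatFunc.X)) ≠ 0 := by
    apply Finset.prod_ne_zero_iff.2
    intro x _
    have : ((x : ℚ) + 1) ≠ 0 := by positivity
    have := one_sub_ne_zero ((x:ℚ)+1) this
    push_cast at this
    exact this
  rw [Nat.factorial_succ]
  push_cast
  generalize (∏ x ∈ Finset.range n, (1 - ((x : K) + 1) * RatFunc.X)⁻¹) = Q
  field_simp
  ring

lemma keyK :
    -(PowerSeries.C (RatFunc.X : K)) ^ 2 * PowerSeries.X *
        PowerSeries.derivative K (PowerSeries.derivative K phi) =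
      ((PowerSeries.C (RatFunc.X : K)) ^ 2 - PowerSeries.C (RatFunc.X : K)) *
        PowerSeries.derivative K phi - phi := by
  ext n
  have hL : -(PowerSeries.C (RatFunc.X : K)) ^ 2 * PowerSeries.X *
      PowerSeries.derivative K (PowerSeries.derivative K phi)
      = -(PowerSeries.C ((RatFunc.X : K) ^ 2) *
        (PowerSeries.X * PowerSeries.derivative K (PowerSeries.derivative K phi))) := by
    rw [map_pow]; ring
  have hR : ((PowerSeries.C (RatFunc.X : K)) ^ 2 - PowerSeries.C (RatFunc.X : K)) *
        PowerSeries.derivative K phi - phi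
      = PowerSeries.C ((RatFunc.X : K) ^ 2 - RatFunc.X) * PowerSeries.derivative K phi - phi := by
    rw [map_sub, map_pow]
  rw [hL, hR, map_neg, PowerSeries.coeff_C_mul, map_sub, PowerSeries.coeff_C_mul]
  cases n with
  | zero =>
    simp only [PowerSeries.coeff_zero_eq_constantCoeff, map_mul, PowerSeries.constantCoeff_X,
      zero_mul, mul_zero, neg_zero]
    rw [← PowerSeries.coeff_zero_eq_constantCoeff_apply, ← PowerSeries.coeff_zero_eq_constantCoeff_apply,
      coeff_derivative]
    have := scalar_rec 0
    push_cast at this ⊢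
    linear_combination this
  | succ m =>
    rw [PowerSeries.coeff_succ_X_mul, coeff_derivative, coeff_derivative]
    have := scalar_rec (m+1)
    push_cast at this ⊢
    linear_combination this

lemma constCoeff_phi_sub_one : constantCoeff (phi - 1) = 0 := by
  have : constantCoeff phi = 1 := by
    rw [← PowerSeries.coeff_zero_eq_constantCoeff_apply]
    simp [phi]
  simp [this]

/-- `−t²x·γ*_{xx} = t²x·(γ*_x)² + t²·γ*_x − t·γ*_x − 1`. -/
theorem gammaStar_pde :
    -(PowerSeries.C (RatFunc.X : RatFunc ℚ)) ^ 2 * PowerSeries.X *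
        PowerSeries.derivative (RatFunc ℚ) (PowerSeries.derivative (RatFunc ℚ) gammaStar) =
      (PowerSeries.C (RatFunc.X : RatFunc ℚ)) ^ 2 * PowerSeries.X *
          (PowerSeries.derivative (RatFunc ℚ) gammaStar) ^ 2 +
        (PowerSeries.C (RatFunc.X : RatFunc ℚ)) ^ 2 *
          PowerSeries.derivative (RatFunc ℚ) gammaStar -
        PowerSeries.C (RatFunc.X : RatFunc ℚ) *
          PowerSeries.derivative (RatFunc ℚ) gammaStar - 1 := by

  have hg := constCoeff_phi_sub_one
  have hDg : PowerSeries.derivative K (phi - 1) = PowerSeries.derivative K phi := by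
    rw [map_sub, Derivation.map_one_eq_zero, sub_zero]
  have h1 : PowerSeries.derivative K gammaStar
      = comp invOneAdd (phi - 1) * PowerSeries.derivative K phi := by
    rw [gammaStar, chain logOneAdd (phi - 1) hg, deriv_logOneAdd, hDg]
  set U := comp invOneAdd (phi - 1) with hUdef
  have h2 : phi * U = 1 := by
    have := geom_inv hg
    rw [show (1 : PowerSeries K) + (phi - 1) = phi by ring] at this
    exact this
  have e : phi * PowerSeries.derivative K U + U * PowerSeries.derivative K phi = 0 := by
    have := congrArg (PowerSeries.derivative K) h2
    rw [Derivation.leibniz, Derivation.map_one_eq_zero, smul_eq_mul, smul_eq_mul] at this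
    exact this
  have hDU : PowerSeries.derivative K U = -(U ^ 2 * PowerSeries.derivative K phi) := by
    linear_combination U * e - PowerSeries.derivative K U * h2
  have hDD : PowerSeries.derivative K (PowerSeries.derivative K gammaStar)
      = U * PowerSeries.derivative K (PowerSeries.derivative K phi)
        - U ^ 2 * (PowerSeries.derivative K phi) ^ 2 := by
    rw [h1, Derivation.leibniz, smul_eq_mul, smul_eq_mul, hDU]
    ring
  rw [hDD, h1]
  linear_combination U * keyK - h2
end

section
/- For P(t,x) ∈ ℚ[[t,x]], let P̂(u,y) be obtained from the change of variables u = t/√(1+4x), y = −x/(1+4x). Then for all integers r ≥ 0 and d ≥ 0, the coefficient of t^r x^d in P equals (−1)^d times the coefficient of u^r y^d in (1+4y)^{(r+2d−2)/2} · P̂(u,y). -/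
open MvPowerSeries

/-- Substitution `P(a₀, a₁)` for a two-variable power series `P`, computed by the
truncated sum (the correct substitution whenever every monomial of `aᵢ` contains the
`i`-th variable, as is the case below). -/
noncomputable def subst2 (a0 a1 P : MvPowerSeries (Fin 2) ℚ) : MvPowerSeries (Fin 2) ℚ :=
  fun m =>
    ∑ e0 ∈ Finset.range (m 0 + 1), ∑ e1 ∈ Finset.range (m 1 + 1),
      MvPowerSeries.coeff (Finsupp.single 0 e0 + Finsupp.single 1 e1) P *
        MvPowerSeries.coeff m (a0 ^ e0 * a1 ^ e1)

namespace IonelAux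

abbrev PS := MvPowerSeries (Fin 2) ℚ

noncomputable def idx (a b : ℕ) : Fin 2 →₀ ℕ := Finsupp.single 0 a + Finsupp.single 1 b

@[simp] lemma idx_apply0 (a b : ℕ) : idx a b 0 = a := by
  simp [idx, Finsupp.single_apply]

@[simp] lemma idx_apply1 (a b : ℕ) : idx a b 1 = b := by
  simp [idx, Finsupp.single_apply]

lemma eq_idx (m : Fin 2 →₀ ℕ) : m = idx (m 0) (m 1) := by
  ext i
  fin_cases i <;> simp

lemma idx_le_iff {a b : ℕ} {m : Fin 2 →₀ ℕ} : idx a b ≤ m ↔ a ≤ m 0 ∧ b ≤ m 1 := by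
  rw [Finsupp.le_iff]
  constructor
  · intro h
    constructor
    · by_cases ha : a = 0
      · simp [ha]
      · have := h 0 (by simpa using ha); simpa using this
    · by_cases hb : b = 0
      · simp [hb]
      · have := h 1 (by simpa using hb); simpa using this
  · rintro ⟨h0, h1⟩ i _
    fin_cases i <;> simpa

lemma idx_sub (a b : ℕ) (m : Fin 2 →₀ ℕ) : m - idx a b = idx (m 0 - a) (m 1 - b) := by
  ext i
  fin_cases i <;> simp [Finsupp.tsub_apply]

@[simp] lemma idx_zero_left (b : ℕ) : idx 0 b = Finsupp.single 1 b := by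
  simp [idx]

def yOnly (f : PS) : Prop := ∀ m : Fin 2 →₀ ℕ, m 0 ≠ 0 → coeff m f = 0

lemma yOnly_one : yOnly 1 := by
  intro m hm
  rw [coeff_one, if_neg]
  intro h; exact hm (by simp [h])

lemma yOnly_C (a : ℚ) : yOnly (C a) := by
  intro m hm
  rw [coeff_C, if_neg]
  intro h; exact hm (by simp [h])

lemma yOnly_X1 : yOnly (X 1) := by
  intro m hm
  rw [coeff_X, if_neg]
  intro h
  apply hm
  simp [h, Finsupp.single_apply]

lemma yOnly_add {f g : PS} (hf : yOnly f) (hg : yOnly g) : yOnly (f + g) := by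
  intro m hm
  rw [map_add, hf m hm, hg m hm, add_zero]

lemma yOnly_mul {f g : PS} (hf : yOnly f) (hg : yOnly g) : yOnly (f * g) := by
  intro m hm
  rw [coeff_mul]
  apply Finset.sum_eq_zero
  rintro ⟨p, q⟩ hpq
  rw [Finset.HasAntidiagonal.mem_antidiagonal] at hpq
  have hsum : p 0 + q 0 = m 0 := by rw [← hpq]; simp
  rcases Nat.eq_zero_or_pos (p 0) with h | h
  · have : q 0 ≠ 0 := by omega
    simp [hg q this]
  · simp [hf p (by omega)]

lemma yOnly_pow {f : PS} (hf : yOnly f) (n : ℕ) : yOnly (f ^ n) := by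
  induction n with
  | zero => simpa using yOnly_one
  | succ k ih => rw [pow_succ]; exact yOnly_mul ih hf

lemma four_eq : (4 : PS) = C (4 : ℚ) := (map_ofNat (C (σ := Fin 2) (R := ℚ)) 4).symm

lemma yOnly_base : yOnly ((1 : PS) + 4 * X 1) :=
  yOnly_add yOnly_one (four_eq ▸ yOnly_mul (yOnly_C 4) yOnly_X1)

lemma fourX_pow (j : ℕ) :
    ((4:PS) * X 1) ^ j = monomial (Finsupp.single 1 j) ((4:ℚ) ^ j) := by
  induction j with
  | zero => simp [monomial_zero_eq_C_apply]
  | succ k ih =>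
    have h4 : (4:PS) * X 1 = monomial (Finsupp.single 1 1) (4:ℚ) := by
      rw [four_eq, ← monomial_zero_eq_C_apply, X, monomial_mul_monomial, zero_add, mul_one]
    rw [pow_succ, ih, h4, monomial_mul_monomial, ← Finsupp.single_add]
    ring_nf

lemma coeff_base_pow (n k : ℕ) :
    coeff (Finsupp.single 1 k) (((1:PS) + 4 * X 1) ^ n) = (n.choose k : ℚ) * 4 ^ k := by
  rw [add_comm, add_pow, map_sum]
  have hterm : ∀ j ∈ Finset.range (n + 1),
      coeff (Finsupp.single 1 k)
        (((4:PS) * X 1) ^ j * 1 ^ (n - j) * ((n.choose j : ℕ) : PS)) =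
      if j = k then (n.choose k : ℚ) * 4 ^ k else 0 := by
    intro j _
    rw [one_pow, mul_one, fourX_pow]
    rw [show ((n.choose j : ℕ) : PS) = C ((n.choose j : ℕ) : ℚ) from
      (map_natCast (C (σ := Fin 2) (R := ℚ)) _).symm]
    rw [← monomial_zero_eq_C_apply, monomial_mul_monomial, add_zero, coeff_monomial]
    split_ifs with h1 h2 h2
    · have : k = j := by simpa using DFunLike.congr_fun h1 (1 : Fin 2)
      subst this; ring
    · have : k = j := by simpa using DFunLike.congr_fun h1 (1 : Fin 2)
      exact absurd this.symm h2
    · subst h2; simp at h1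
    · rfl
  rw [Finset.sum_congr rfl hterm, Finset.sum_ite_eq' (Finset.range (n+1)) k]
  split_ifs with h
  · rfl
  · rw [Finset.mem_range, not_lt] at h
    rw [Nat.choose_eq_zero_of_lt (by omega)]
    simp

section main

variable {Ty Sy : PS}
  (hTy0 : MvPowerSeries.constantCoeff Ty = 1)
  (hTy : Ty ^ 2 = 1 + 4 * MvPowerSeries.X 1)
  (hSy : Sy * Ty = 1)

include hTy0 hTy in
lemma yOnly_Ty : yOnly Ty := by
  have key : ∀ n : ℕ, ∀ m : Fin 2 →₀ ℕ, m 0 + m 1 = n → m 0 ≠ 0 → coeff m Ty = 0 := by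
    intro n
    induction n using Nat.strong_induction_on with
    | _ n ih =>
      intro m hmn hm0
      have hsq : coeff m (Ty ^ 2) = 0 := by rw [hTy]; exact yOnly_base m hm0
      rw [sq, coeff_mul] at hsq
      have hmne : m ≠ 0 := by intro h; exact hm0 (by simp [h])
      have hpair : ((m, (0 : Fin 2 →₀ ℕ)) : _ × _) ≠ ((0 : Fin 2 →₀ ℕ), m) := by
        intro h; exact hmne (by simpa using (congrArg Prod.snd h).symm)
      have hsub : ({(m, (0 : Fin 2 →₀ ℕ)), ((0 : Fin 2 →₀ ℕ), m)} : Finset _) ⊆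
          Finset.HasAntidiagonal.antidiagonal m := by
        intro x hx
        rw [Finset.mem_insert, Finset.mem_singleton] at hx
        rcases hx with h | h <;> subst h <;> simp [Finset.HasAntidiagonal.mem_antidiagonal]
      have hzero : ∀ x ∈ Finset.HasAntidiagonal.antidiagonal m,
          x ∉ ({(m, (0 : Fin 2 →₀ ℕ)), ((0 : Fin 2 →₀ ℕ), m)} : Finset _) →
          coeff x.1 Ty * coeff x.2 Ty = 0 := by
        rintro ⟨p, q⟩ hpq hnot
        rw [Finset.HasAntidiagonal.mem_antidiagonal] at hpq
        rw [Finset.mem_insert, Finset.mem_singleton] at hnot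
        push_neg at hnot
        have hp0 : p ≠ 0 := by
          intro h; exact hnot.2 (by simp [h, ← hpq])
        have hq0 : q ≠ 0 := by
          intro h; exact hnot.1 (by simp [h, ← hpq, Prod.ext_iff])
        have hps : p 0 + q 0 = m 0 := by rw [← hpq]; simp
        have hps1 : p 1 + q 1 = m 1 := by rw [← hpq]; simp
        have hpdeg : 1 ≤ q 0 + q 1 := by
          rcases Finsupp.ne_iff.mp hq0 with ⟨i, hi⟩
          fin_cases i <;> simp_all <;> omega
        have hqdeg : 1 ≤ p 0 + p 1 := by
          rcases Finsupp.ne_iff.mp hp0 with ⟨i, hi⟩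
          fin_cases i <;> simp_all <;> omega
        rcases Nat.eq_zero_or_pos (p 0) with h | h
        · have hq0' : q 0 ≠ 0 := by omega
          rw [ih (q 0 + q 1) (by omega) q rfl hq0', mul_zero]
        · rw [ih (p 0 + p 1) (by omega) p rfl (by omega), zero_mul]
      rw [← Finset.sum_subset hsub hzero, Finset.sum_pair hpair] at hsq
      have h0 : coeff (0 : Fin 2 →₀ ℕ) Ty = 1 := hTy0
      rw [h0] at hsq
      simp only [mul_one, one_mul] at hsq
      linarith
  intro m hm
  exact key (m 0 + m 1) m rfl hm

include hTy0 hTy hSy in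
lemma yOnly_Sy : yOnly Sy := by
  have hTyY := yOnly_Ty hTy0 hTy
  have key : ∀ n : ℕ, ∀ m : Fin 2 →₀ ℕ, m 0 + m 1 = n → m 0 ≠ 0 → coeff m Sy = 0 := by
    intro n
    induction n using Nat.strong_induction_on with
    | _ n ih =>
      intro m hmn hm0
      have hone : coeff m (Sy * Ty) = 0 := by
        rw [hSy, coeff_one, if_neg]
        intro h; exact hm0 (by simp [h])
      rw [coeff_mul] at hone
      have hsub : ({(m, (0 : Fin 2 →₀ ℕ))} : Finset _) ⊆ Finset.HasAntidiagonal.antidiagonal m := by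
        intro x hx
        rw [Finset.mem_singleton] at hx
        subst hx; simp [Finset.HasAntidiagonal.mem_antidiagonal]
      have hzero : ∀ x ∈ Finset.HasAntidiagonal.antidiagonal m,
          x ∉ ({(m, (0 : Fin 2 →₀ ℕ))} : Finset _) →
          coeff x.1 Sy * coeff x.2 Ty = 0 := by
        rintro ⟨p, q⟩ hpq hnot
        rw [Finset.HasAntidiagonal.mem_antidiagonal] at hpq
        rw [Finset.mem_singleton] at hnot
        have hq0 : q ≠ 0 := by
          intro h; exact hnot (by simp [h, ← hpq])
        have hps : p 0 + q 0 = m 0 := by rw [← hpq]; simp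
        have hps1 : p 1 + q 1 = m 1 := by rw [← hpq]; simp
        rcases Nat.eq_zero_or_pos (q 0) with h | h
        · have hp0' : p 0 ≠ 0 := by omega
          have hdeg : 1 ≤ q 0 + q 1 := by
            rcases Finsupp.ne_iff.mp hq0 with ⟨i, hi⟩
            fin_cases i <;> simp_all <;> omega
          rw [ih (p 0 + p 1) (by omega) p rfl hp0', zero_mul]
        · rw [hTyY q (by omega), mul_zero]
      rw [← Finset.sum_subset hsub hzero, Finset.sum_singleton] at hone
      have h0 : coeff (0 : Fin 2 →₀ ℕ) Ty = 1 := hTy0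
      rw [h0, mul_one] at hone
      exact hone
  intro m hm
  exact key (m 0 + m 1) m rfl hm

include hTy0 hSy in
lemma constCoeff_Sy : MvPowerSeries.constantCoeff Sy = 1 := by
  have := congrArg (MvPowerSeries.constantCoeff (σ := Fin 2) (R := ℚ)) hSy
  rw [map_mul, hTy0, mul_one, map_one] at this
  exact this

include hTy0 hTy hSy in
lemma bracket (r d b : ℕ) (hb : b ≤ d) :
    coeff (Finsupp.single 1 (d - b))
      ((if 2 ≤ r + 2 * d then Ty ^ (r + 2 * d - 2) else Sy ^ (2 - (r + 2 * d))) *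
        Sy ^ (r + 2 * b)) = if b = d then 1 else 0 := by
  have hSy2coeff : coeff (Finsupp.single 1 (0:ℕ)) (Sy ^ 2) = 1 := by
    rw [Finsupp.single_zero, coeff_zero_eq_constantCoeff, map_pow, constCoeff_Sy hTy0 hSy]
    norm_num
  have hTS : ∀ n : ℕ, Ty ^ n * Sy ^ n = 1 := by
    intro n
    rw [← mul_pow, mul_comm Ty Sy, hSy, one_pow]
  rcases eq_or_lt_of_le hb with h | h
  · subst h
    rw [if_pos rfl, Nat.sub_self]
    split_ifs with h2
    · have : Ty ^ (r + 2 * b - 2) * Sy ^ (r + 2 * b)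
          = (Ty ^ (r + 2 * b - 2) * Sy ^ (r + 2 * b - 2)) * Sy ^ 2 := by
        rw [mul_assoc, ← pow_add]
        congr 2
        omega
      rw [this, hTS, one_mul, hSy2coeff]
    · have : Sy ^ (2 - (r + 2 * b)) * Sy ^ (r + 2 * b) = Sy ^ 2 := by
        rw [← pow_add]
        congr 1
        omega
      rw [this, hSy2coeff]
  · rw [if_pos (show 2 ≤ r + 2 * d by omega), if_neg (show ¬ b = d by omega)]
    have hexp : Ty ^ (r + 2 * d - 2) * Sy ^ (r + 2 * b)
        = (Ty ^ (r + 2 * b) * Sy ^ (r + 2 * b)) * Ty ^ (2 * (d - b - 1)) := by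
      rw [mul_right_comm, ← pow_add]
      congr 2
      omega
    rw [hexp, hTS, one_mul, pow_mul, hTy, coeff_base_pow,
      Nat.choose_eq_zero_of_lt (by omega), Nat.cast_zero, zero_mul]

include hTy0 hTy hSy in
lemma key_monomial (r d e0 e1 : ℕ) (he0 : e0 ≤ r) (he1 : e1 ≤ d) :
    coeff (idx r d)
      ((if 2 ≤ r + 2 * d then Ty ^ (r + 2 * d - 2) else Sy ^ (2 - (r + 2 * d))) *
        ((X 0 * Sy) ^ e0 * (-(X 1) * Sy ^ 2) ^ e1)) =
    if e0 = r ∧ e1 = d then ((-1 : ℚ)) ^ d else 0 := by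
  set F : PS := (if 2 ≤ r + 2 * d then Ty ^ (r + 2 * d - 2) else Sy ^ (2 - (r + 2 * d)))
    with hF
  have hX : (X 0 : PS) ^ e0 * (X 1) ^ e1 = monomial (idx e0 e1) 1 := by
    rw [X_pow_eq, X_pow_eq, monomial_mul_monomial, mul_one]
    rfl
  have expand : F * ((X 0 * Sy) ^ e0 * (-(X 1) * Sy ^ 2) ^ e1)
      = C ((-1 : ℚ) ^ e1) *
        (monomial (idx e0 e1) 1 * (F * Sy ^ (e0 + 2 * e1))) := by
    rw [show C ((-1 : ℚ) ^ e1) = ((-1 : PS)) ^ e1 by rw [map_pow, map_neg, map_one]]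
    rw [← hX, pow_add, pow_mul]
    ring
  rw [expand, coeff_C_mul, coeff_monomial_mul,
    if_pos (idx_le_iff.mpr (by simp [he0, he1])), one_mul, idx_sub]
  simp only [idx_apply0, idx_apply1]
  have hWy : yOnly (F * Sy ^ (e0 + 2 * e1)) := by
    apply yOnly_mul _ (yOnly_pow (yOnly_Sy hTy0 hTy hSy) _)
    rw [hF]
    split_ifs
    · exact yOnly_pow (yOnly_Ty hTy0 hTy) _
    · exact yOnly_pow (yOnly_Sy hTy0 hTy hSy) _
  rcases eq_or_lt_of_le he0 with h | h
  · subst h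
    rw [Nat.sub_self, idx_zero_left, hF]
    rw [bracket hTy0 hTy hSy e0 d e1 he1]
    split_ifs with h1 h2 h2
    · subst h1; ring
    · exact absurd ⟨rfl, h1⟩ h2
    · exact absurd h2.2 h1
    · ring
  · rw [hWy (idx (r - e0) (d - e1)) (by simp; omega), mul_zero, if_neg (by omega)]

omit hTy0 hTy hSy in
lemma vanish (q : Fin 2 →₀ ℕ) (e0 e1 : ℕ) (h : q 0 < e0 ∨ q 1 < e1) :
    coeff q ((X 0 * Sy) ^ e0 * (-(X 1) * Sy ^ 2) ^ e1) = 0 := by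
  have hX : (X 0 : PS) ^ e0 * (X 1) ^ e1 = monomial (idx e0 e1) 1 := by
    rw [X_pow_eq, X_pow_eq, monomial_mul_monomial, mul_one]
    rfl
  have expand : ((X 0 : PS) * Sy) ^ e0 * (-(X 1) * Sy ^ 2) ^ e1
      = C ((-1 : ℚ) ^ e1) *
        (monomial (idx e0 e1) 1 * Sy ^ (e0 + 2 * e1)) := by
    rw [show C ((-1 : ℚ) ^ e1) = ((-1 : PS)) ^ e1 by rw [map_pow, map_neg, map_one]]
    rw [← hX, pow_add, pow_mul]
    ring
  rw [expand, coeff_C_mul, coeff_monomial_mul, if_neg, mul_zero]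
  rw [idx_le_iff]
  omega

end main

end IonelAux

open IonelAux in
/-- Ionel's coefficient relation: with `u = t/√(1+4x)`, `y = −x/(1+4x)` and
`P̂(u,y) = P(u/√(1+4y), −y/(1+4y))`, one has
`[P]_{t^r x^d} = (−1)^d [(1+4y)^{(r+2d−2)/2} · P̂]_{u^r y^d}`.
Here `Ty = (1+4y)^{1/2}` and `Sy = (1+4y)^{-1/2}`, so that `u/√(1+4y) = u·Sy`,
`−y/(1+4y) = −y·Sy²`, and `(1+4y)^{(r+2d−2)/2}` is `Ty^(r+2d−2)` resp. `Sy^(2−(r+2d))`. -/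
theorem ionel_coeff_relation (P : MvPowerSeries (Fin 2) ℚ)
    (Ty Sy : MvPowerSeries (Fin 2) ℚ)
    (hTy0 : MvPowerSeries.constantCoeff Ty = 1)
    (hTy : Ty ^ 2 = 1 + 4 * MvPowerSeries.X 1)
    (hSy : Sy * Ty = 1)
    (r d : ℕ) :
    MvPowerSeries.coeff (Finsupp.single 0 r + Finsupp.single 1 d) P =
      (-1) ^ d *
        MvPowerSeries.coeff (Finsupp.single 0 r + Finsupp.single 1 d)
          ((if 2 ≤ r + 2 * d then Ty ^ (r + 2 * d - 2) else Sy ^ (2 - (r + 2 * d))) *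
            subst2 (MvPowerSeries.X 0 * Sy) (-(MvPowerSeries.X 1) * Sy ^ 2) P) := by
  classical
  set F : PS := (if 2 ≤ r + 2 * d then Ty ^ (r + 2 * d - 2) else Sy ^ (2 - (r + 2 * d)))
    with hF
  set a0 : PS := MvPowerSeries.X 0 * Sy with ha0
  set a1 : PS := -(MvPowerSeries.X 1) * Sy ^ 2 with ha1
  have hm : (Finsupp.single 0 r + Finsupp.single 1 d : Fin 2 →₀ ℕ) = idx r d := rfl
  rw [hm]
  -- step 2: extended expansion of coeff q (subst2 ...)
  have step2 : ∀ q : Fin 2 →₀ ℕ, q 0 ≤ r → q 1 ≤ d →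
      coeff q (subst2 a0 a1 P) =
      ∑ e0 ∈ Finset.range (r + 1), ∑ e1 ∈ Finset.range (d + 1),
        coeff (idx e0 e1) P * coeff q (a0 ^ e0 * a1 ^ e1) := by
    intro q hq0 hq1
    have hdef : coeff q (subst2 a0 a1 P) =
        ∑ e0 ∈ Finset.range (q 0 + 1), ∑ e1 ∈ Finset.range (q 1 + 1),
          coeff (idx e0 e1) P * coeff q (a0 ^ e0 * a1 ^ e1) := rfl
    rw [hdef]
    rw [Finset.sum_subset (Finset.range_subset_range.mpr (show q 0 + 1 ≤ r + 1 by omega))]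
    · apply Finset.sum_congr rfl
      intro e0 _
      rw [Finset.sum_subset (Finset.range_subset_range.mpr (show q 1 + 1 ≤ d + 1 by omega))]
      intro e1 _ he1
      rw [Finset.mem_range, not_lt] at he1
      rw [ha0, ha1, vanish (Sy := Sy) q e0 e1 (Or.inr (by omega)), mul_zero]
    · intro e0 _ he0
      rw [Finset.mem_range, not_lt] at he0
      apply Finset.sum_eq_zero
      intro e1 _
      rw [ha0, ha1, vanish (Sy := Sy) q e0 e1 (Or.inl (by omega)), mul_zero]
  -- step 3: main expansion
  have step3 : coeff (idx r d) (F * subst2 a0 a1 P) =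
      ∑ e0 ∈ Finset.range (r + 1), ∑ e1 ∈ Finset.range (d + 1),
        coeff (idx e0 e1) P * coeff (idx r d) (F * (a0 ^ e0 * a1 ^ e1)) := by
    rw [coeff_mul]
    have hrw : ∀ pq ∈ Finset.HasAntidiagonal.antidiagonal (idx r d),
        coeff pq.1 F * coeff pq.2 (subst2 a0 a1 P) =
        ∑ e0 ∈ Finset.range (r + 1), ∑ e1 ∈ Finset.range (d + 1),
          coeff pq.1 F * (coeff (idx e0 e1) P * coeff pq.2 (a0 ^ e0 * a1 ^ e1)) := by
      intro pq hpq
      rw [Finset.HasAntidiagonal.mem_antidiagonal] at hpq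
      have h0 : pq.2 0 ≤ r := by
        have h := DFunLike.congr_fun hpq (0 : Fin 2)
        simp only [Finsupp.add_apply, idx_apply0] at h
        omega
      have h1 : pq.2 1 ≤ d := by
        have h := DFunLike.congr_fun hpq (1 : Fin 2)
        simp only [Finsupp.add_apply, idx_apply1] at h
        omega
      rw [step2 pq.2 h0 h1, Finset.mul_sum]
      apply Finset.sum_congr rfl
      intro e0 _
      rw [Finset.mul_sum]
    rw [Finset.sum_congr rfl hrw]
    rw [Finset.sum_comm]
    apply Finset.sum_congr rfl
    intro e0 _
    rw [Finset.sum_comm]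
    apply Finset.sum_congr rfl
    intro e1 _
    rw [coeff_mul, Finset.mul_sum]
    apply Finset.sum_congr rfl
    intro pq _
    ring
  rw [step3]
  have hfinal : ∀ e0 ∈ Finset.range (r + 1),
      (∑ e1 ∈ Finset.range (d + 1),
        coeff (idx e0 e1) P * coeff (idx r d) (F * (a0 ^ e0 * a1 ^ e1))) =
      if e0 = r then coeff (idx r d) P * (-1 : ℚ) ^ d else 0 := by
    intro e0 he0
    rw [Finset.mem_range] at he0
    have hsum : ∀ e1 ∈ Finset.range (d + 1),
        coeff (idx e0 e1) P * coeff (idx r d) (F * (a0 ^ e0 * a1 ^ e1)) =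
        if e0 = r ∧ e1 = d then coeff (idx r d) P * (-1 : ℚ) ^ d else 0 := by
      intro e1 he1
      rw [Finset.mem_range] at he1
      rw [ha0, ha1, hF]
      rw [key_monomial hTy0 hTy hSy r d e0 e1 (by omega) (by omega)]
      split_ifs with h
      · rw [h.1, h.2]
      · rw [mul_zero]
    rw [Finset.sum_congr rfl hsum]
    by_cases h : e0 = r
    · subst h
      simp only [eq_self_iff_true, true_and, if_true]
      rw [Finset.sum_ite_eq' (Finset.range (d + 1)) d]
      simp
    · simp [h]
  rw [Finset.sum_congr rfl hfinal, Finset.sum_ite_eq' (Finset.range (r + 1)) r,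
    if_pos (by simp)]
  have hneg : ((-1 : ℚ)) ^ d * ((-1 : ℚ)) ^ d = 1 := by
    rw [← pow_add]
    exact Even.neg_one_pow ⟨d, rfl⟩
  rw [show ((-1 : ℚ)) ^ d * (MvPowerSeries.coeff (idx r d) P * ((-1 : ℚ)) ^ d)
      = ((-1 : ℚ) ^ d * (-1 : ℚ) ^ d) * MvPowerSeries.coeff (idx r d) P by ring,
    hneg, one_mul]
end

section
/- Let A(z) = Σ_{i≥0} ((6i)!/((3i)!(2i)!)) · (z/72)^i. Then A satisfies the hypergeometric differential equation 36z²·A'' + (72z − 6)·A' + 5A = 0. -/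
open PowerSeries

/-- `A(z) = Σ_{i≥0} ((6i)!/((3i)!(2i)!)) (z/72)^i`. -/
noncomputable def hgA : PowerSeries ℚ :=
  PowerSeries.mk fun i =>
    ((6 * i).factorial : ℚ) / (((3 * i).factorial : ℚ) * ((2 * i).factorial : ℚ)) / 72 ^ i

/-- coefficient of hgA -/
noncomputable def a (i : ℕ) : ℚ :=
  ((6 * i).factorial : ℚ) / (((3 * i).factorial : ℚ) * ((2 * i).factorial : ℚ)) / 72 ^ i

lemma key (n : ℕ) : (36*n^2+36*n+5 : ℚ) * a n = 6*(n+1) * a (n+1) := by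
  have h6 : (6*(n+1)).factorial = (6*n+6)*((6*n+5)*((6*n+4)*((6*n+3)*((6*n+2)*((6*n+1)*(6*n).factorial))))) := by
    rw [show 6*(n+1) = (6*n+5)+1 by ring, Nat.factorial_succ,
        show 6*n+5 = (6*n+4)+1 by ring, Nat.factorial_succ,
        show 6*n+4 = (6*n+3)+1 by ring, Nat.factorial_succ,
        show 6*n+3 = (6*n+2)+1 by ring, Nat.factorial_succ,
        show 6*n+2 = (6*n+1)+1 by ring, Nat.factorial_succ,
        show 6*n+1 = (6*n)+1 by ring, Nat.factorial_succ]
  have h3 : (3*(n+1)).factorial = (3*n+3)*((3*n+2)*((3*n+1)*(3*n).factorial)) := by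
    rw [show 3*(n+1) = (3*n+2)+1 by ring, Nat.factorial_succ,
        show 3*n+2 = (3*n+1)+1 by ring, Nat.factorial_succ,
        show 3*n+1 = (3*n)+1 by ring, Nat.factorial_succ]
  have h2 : (2*(n+1)).factorial = (2*n+2)*((2*n+1)*(2*n).factorial) := by
    rw [show 2*(n+1) = (2*n+1)+1 by ring, Nat.factorial_succ,
        show 2*n+1 = (2*n)+1 by ring, Nat.factorial_succ]
  have p3 : ((3*n).factorial : ℚ) ≠ 0 := Nat.cast_ne_zero.2 (Nat.factorial_ne_zero _)
  have p2 : ((2*n).factorial : ℚ) ≠ 0 := Nat.cast_ne_zero.2 (Nat.factorial_ne_zero _)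
  have p72 : ((72:ℚ)^n) ≠ 0 := pow_ne_zero _ (by norm_num)
  simp only [a, h6, h3, h2]
  push_cast
  field_simp
  ring

/-- `36z²·A'' + (72z − 6)·A' + 5A = 0`. -/
theorem hgA_ode :
    36 * PowerSeries.X ^ 2 *
        PowerSeries.derivative ℚ (PowerSeries.derivative ℚ hgA) +
      (72 * PowerSeries.X - 6) * PowerSeries.derivative ℚ hgA + 5 * hgA = 0 := by
  have hA : ∀ n, coeff n hgA = a n := fun n => by simp [hgA, a, coeff_mk]
  have c36 : (36 : ℚ⟦X⟧) = C (R := ℚ) 36 := (map_ofNat (C (R := ℚ)) 36).symm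
  have c72 : (72 : ℚ⟦X⟧) = C (R := ℚ) 72 := (map_ofNat (C (R := ℚ)) 72).symm
  have c6 : (6 : ℚ⟦X⟧) = C (R := ℚ) 6 := (map_ofNat (C (R := ℚ)) 6).symm
  have c5 : (5 : ℚ⟦X⟧) = C (R := ℚ) 5 := (map_ofNat (C (R := ℚ)) 5).symm
  ext n
  have e1 : 36 * (X:ℚ⟦X⟧) ^ 2 * derivative ℚ (derivative ℚ hgA)
      = X * (X * (C (36:ℚ) * derivative ℚ (derivative ℚ hgA))) := by rw [c36]; ring
  have e2 : (72:ℚ⟦X⟧) * X * derivative ℚ hgA = X * (C (72:ℚ) * derivative ℚ hgA) := by rw [c72]; ring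
  rw [e1, sub_mul, e2, c6, c5]
  simp only [map_add, map_sub, sub_mul, add_mul, map_zero]
  rcases n with _ | n
  · simp [coeff_zero_X_mul, coeff_C_mul, coeff_derivative, hA]
    have := key 0
    simp [a] at this ⊢
    nlinarith [this]
  · rcases n with _ | n
    · simp [coeff_succ_X_mul, coeff_zero_X_mul, coeff_C_mul, coeff_derivative, hA]
      have := key 1
      push_cast at this ⊢
      nlinarith [this]
    · simp only [coeff_succ_X_mul, coeff_C_mul, coeff_derivative, hA, LinearMap.map_sub]
      have h1 := key (n+1)
      have h2 := key (n+2)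
      push_cast at h1 h2 ⊢
      nlinarith [h1, h2]
end

section
/- Let C = B/A where A(z) = Σ_{i≥0} ((6i)!/((3i)!(2i)!))·(z/72)^i and B(z) = Σ_{i≥0} ((6i)!/((3i)!(2i)!))·((6i+1)/(6i−1))·(z/72)^i. Then C satisfies the Riccati equation 12z²·C' = 1 + 4z·C − C². -/
open PowerSeries

/-- `B(z) = Σ_{i≥0} ((6i)!/((3i)!(2i)!))·((6i+1)/(6i−1)) (z/72)^i`. -/
noncomputable def hgB : PowerSeries ℚ :=
  PowerSeries.mk fun i =>
    ((6 * i).factorial : ℚ) / (((3 * i).factorial : ℚ) * ((2 * i).factorial : ℚ)) *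
      ((6 * (i : ℚ) + 1) / (6 * (i : ℚ) - 1)) / 72 ^ i

/-- `C = B/A`. -/
noncomputable def hgC : PowerSeries ℚ := hgB * hgA⁻¹

/-! ### Auxiliary coefficient arithmetic -/

noncomputable def aa (n : ℕ) : ℚ :=
  ((6 * n).factorial : ℚ) / (((3 * n).factorial : ℚ) * ((2 * n).factorial : ℚ)) / 72 ^ n

lemma fe6 (n : ℕ) : ((6 * (n + 1)).factorial : ℚ) =
    (6*(n:ℚ)+6)*(6*n+5)*(6*n+4)*(6*n+3)*(6*n+2)*(6*n+1)*((6*n).factorial : ℚ) := by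
  have h : 6 * (n + 1) = 6*n + 1 + 1 + 1 + 1 + 1 + 1 := by ring
  rw [h]
  simp only [Nat.factorial_succ]
  push_cast
  ring

lemma fe3 (n : ℕ) : ((3 * (n + 1)).factorial : ℚ) =
    (3*(n:ℚ)+3)*(3*n+2)*(3*n+1)*((3*n).factorial : ℚ) := by
  have h : 3 * (n + 1) = 3*n + 1 + 1 + 1 := by ring
  rw [h]
  simp only [Nat.factorial_succ]
  push_cast
  ring

lemma fe2 (n : ℕ) : ((2 * (n + 1)).factorial : ℚ) =
    (2*(n:ℚ)+2)*(2*n+1)*((2*n).factorial : ℚ) := by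
  have h : 2 * (n + 1) = 2*n + 1 + 1 := by ring
  rw [h]
  simp only [Nat.factorial_succ]
  push_cast
  ring

lemma aa_succ (n : ℕ) : aa (n + 1) = aa n * ((6*(n:ℚ)+1) * (6*(n:ℚ)+5)) / (6*((n:ℚ)+1)) := by
  have h1 : ((6*n).factorial : ℚ) ≠ 0 := by positivity
  have h2 : ((3*n).factorial : ℚ) ≠ 0 := by positivity
  have h3 : ((2*n).factorial : ℚ) ≠ 0 := by positivity
  have h4 : ((72:ℚ))^n ≠ 0 := by positivity
  have h5 : (6*(n:ℚ)+6) ≠ 0 := by positivity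
  have h6 : (3*(n:ℚ)+3) ≠ 0 := by positivity
  have h7 : (3*(n:ℚ)+2) ≠ 0 := by positivity
  have h8 : (3*(n:ℚ)+1) ≠ 0 := by positivity
  have h9 : (2*(n:ℚ)+2) ≠ 0 := by positivity
  have h10 : (2*(n:ℚ)+1) ≠ 0 := by positivity
  have h11 : (6*((n:ℚ)+1)) ≠ 0 := by positivity
  unfold aa
  rw [fe6, fe3, fe2, pow_succ]
  field_simp
  ring

lemma idA (m : ℕ) : 6*((m:ℚ)+1) * aa (m+1) = (36*(m:ℚ)^2+36*(m:ℚ)+5) * aa m := by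
  rw [aa_succ]
  have h11 : (6*((m:ℚ)+1)) ≠ 0 := by positivity
  field_simp
  ring

lemma idB (k : ℕ) : aa (k+2) * ((6*((k:ℚ)+2)+1)/(6*((k:ℚ)+2)-1)) =
    12*((k:ℚ)+1)*aa (k+1) + 2*aa (k+1) - aa (k+2) := by
  have h := aa_succ (k+1)
  push_cast at h
  rw [h]
  have h1 : (6*((k:ℚ)+2)-1) ≠ 0 := by
    have : (6*((k:ℚ)+2)-1) = 6*(k:ℚ)+11 := by ring
    rw [this]; positivity
  have h2 : (6*((k:ℚ)+1+1)) ≠ 0 := by positivity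
  field_simp
  ring

/-! ### Coefficient extraction helpers -/

lemma coeff_hgA (n : ℕ) : coeff n hgA = aa n := by rw [hgA, coeff_mk]; rfl

lemma coeff_hgB (n : ℕ) :
    coeff n hgB = aa n * ((6 * (n : ℚ) + 1) / (6 * (n : ℚ) - 1)) := by
  rw [hgB, coeff_mk, aa]; ring

lemma cz2 (f : ℚ⟦X⟧) : coeff 0 ((X:ℚ⟦X⟧)^2 * f) = 0 := by
  rw [coeff_X_pow_mul']; norm_num

lemma cz2' (f : ℚ⟦X⟧) : coeff 1 ((X:ℚ⟦X⟧)^2 * f) = 0 := by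
  rw [coeff_X_pow_mul']; norm_num

lemma cs2 (f : ℚ⟦X⟧) (n : ℕ) : coeff (n+2) ((X:ℚ⟦X⟧)^2 * f) = coeff n f :=
  coeff_X_pow_mul f 2 n

lemma csX (f : ℚ⟦X⟧) (n : ℕ) : coeff (n+1) ((X:ℚ⟦X⟧) * f) = coeff n f :=
  coeff_succ_X_mul n f

/-! ### The differential equation for `A` -/

lemma hode : (36:ℚ⟦X⟧) * ((X:ℚ⟦X⟧)^2 * derivative ℚ (derivative ℚ hgA)) =
    6 * derivative ℚ hgA - 72 * ((X:ℚ⟦X⟧) * derivative ℚ hgA) - 5 * hgA := by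
  have h36 : (36:ℚ⟦X⟧) = C 36 := (map_ofNat _ _).symm
  have h6 : (6:ℚ⟦X⟧) = C 6 := (map_ofNat _ _).symm
  have h72 : (72:ℚ⟦X⟧) = C 72 := (map_ofNat _ _).symm
  have h5 : (5:ℚ⟦X⟧) = C 5 := (map_ofNat _ _).symm
  ext n
  rw [h36, h6, h72, h5, map_sub, map_sub, coeff_C_mul, coeff_C_mul, coeff_C_mul, coeff_C_mul]
  match n with
  | 0 =>
    rw [cz2, coeff_zero_X_mul]
    simp only [coeff_derivative, coeff_hgA]
    norm_num [aa, Nat.factorial]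
  | 1 =>
    rw [cz2', csX]
    simp only [coeff_derivative, coeff_hgA]
    norm_num [aa, Nat.factorial]
  | (n+2) =>
    rw [cs2, csX]
    simp only [coeff_derivative, coeff_hgA]
    rw [show n+1+1 = n+2 from rfl]
    have h := idA (n+2)
    push_cast at h ⊢
    linear_combination -h

/-! ### `B` in terms of `A` -/

lemma hgB_eq : hgB = 12 * ((X:ℚ⟦X⟧)^2 * derivative ℚ hgA) - hgA + 2 * ((X:ℚ⟦X⟧) * hgA) := by
  have h12 : (12:ℚ⟦X⟧) = C 12 := (map_ofNat _ _).symm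
  have h2 : (2:ℚ⟦X⟧) = C 2 := (map_ofNat _ _).symm
  ext n
  rw [h12, h2, map_add, map_sub, coeff_C_mul, coeff_C_mul]
  match n with
  | 0 =>
    rw [cz2, coeff_zero_X_mul, coeff_hgB, coeff_hgA]
    norm_num [aa, Nat.factorial]
  | 1 =>
    rw [cz2', csX, coeff_hgB, coeff_hgA, coeff_hgA]
    norm_num [aa, Nat.factorial]
  | (k+2) =>
    rw [cs2, csX, coeff_hgB]
    simp only [coeff_derivative, coeff_hgA]
    rw [show k+1+1 = k+2 from rfl]
    have h := idB k
    push_cast at h ⊢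
    linear_combination h

/-! ### Basic facts about `A` -/

lemma constA : constantCoeff hgA = 1 := by
  rw [← coeff_zero_eq_constantCoeff_apply, coeff_hgA]
  norm_num [aa, Nat.factorial]

lemma hgA_ne : hgA ≠ 0 := by
  intro h
  have := constA
  rw [h] at this
  simp at this

lemma hgA_inv : hgA * hgA⁻¹ = 1 :=
  PowerSeries.mul_inv_cancel _ (by rw [constA]; exact one_ne_zero)

lemma d_mul (f g : ℚ⟦X⟧) :
    derivative ℚ (f * g) = f * derivative ℚ g + g * derivative ℚ f := by
  rw [Derivation.leibniz, smul_eq_mul, smul_eq_mul]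

/-- derivative of `B` expressed through `A`. -/
lemma hdB : derivative ℚ hgB =
    12 * ((X:ℚ⟦X⟧)^2 * derivative ℚ (derivative ℚ hgA)) + 26 * ((X:ℚ⟦X⟧) * derivative ℚ hgA)
      - derivative ℚ hgA + 2 * hgA := by
  have h12 : (12:ℚ⟦X⟧) = C 12 := (map_ofNat _ _).symm
  have h2 : (2:ℚ⟦X⟧) = C 2 := (map_ofNat _ _).symm
  have hd12 : derivative ℚ (12:ℚ⟦X⟧) = 0 := by rw [h12, derivative_C]
  have hd2 : derivative ℚ (2:ℚ⟦X⟧) = 0 := by rw [h2, derivative_C]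
  have hX2 : derivative ℚ ((X:ℚ⟦X⟧)^2) = 2 * X := by
    rw [pow_two, d_mul, derivative_X]; ring
  rw [hgB_eq, map_add, map_sub]
  simp only [d_mul, hd12, hd2, hX2, derivative_X]
  ring

/-- The key polynomial identity. -/
lemma key_s12 : 12 * (X:ℚ⟦X⟧)^2 * (derivative ℚ hgB * hgA - hgB * derivative ℚ hgA) =
    hgA^2 + 4 * (X:ℚ⟦X⟧) * hgA * hgB - hgB^2 := by
  rw [hdB, hgB_eq]
  linear_combination (4*(X:ℚ⟦X⟧)^2*hgA) * hode

/-- `C` satisfies the Riccati equation `12z²·C' = 1 + 4z·C − C²`. -/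
theorem hgC_riccati :
    12 * PowerSeries.X ^ 2 * PowerSeries.derivative ℚ hgC =
      1 + 4 * PowerSeries.X * hgC - hgC ^ 2 := by
  have hu := hgA_inv
  have hC : hgA * hgC = hgB := by
    rw [hgC, ← mul_assoc, mul_comm hgA hgB, mul_assoc, hu, mul_one]
  have hdinv : derivative ℚ (hgA⁻¹) = -hgA⁻¹ ^ 2 * derivative ℚ hgA := derivative_inv' hgA
  have hdC : hgA^2 * derivative ℚ hgC = derivative ℚ hgB * hgA - hgB * derivative ℚ hgA := by
    rw [hgC, d_mul, hdinv]
    linear_combination (-(hgB * derivative ℚ hgA)*(hgA*hgA⁻¹+1) + (derivative ℚ hgB)*hgA) * hu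
  refine mul_left_cancel₀ (pow_ne_zero 2 hgA_ne) ?_
  linear_combination (12*(X:ℚ⟦X⟧)^2) * hdC + key_s12 + (hgA*hgC + hgB - 4*(X:ℚ⟦X⟧)*hgA) * hC
end

section
/- Let C be a formal power series satisfying 12z²C' = 1 + 4zC − C², and define C_1 = C, C_{i+1} = 12z²C_i' − 4izC_i. Then for every n ≥ 1, C_n is a polynomial in C with coefficients in ℚ[z]: there exist polynomials f_{n,j} ∈ ℚ[z] with C_n = Σ_{j=0}^n f_{n,j}·C^j. -/
open PowerSeries

private lemma coePS_natCast (n : ℕ) :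
    ((n : Polynomial ℚ) : PowerSeries ℚ) = (n : PowerSeries ℚ) := by
  rw [← Polynomial.coeToPowerSeries.ringHom_apply, map_natCast]

private lemma coePS_ofNat (n : ℕ) [n.AtLeastTwo] :
    ((no_index (OfNat.ofNat n) : Polynomial ℚ) : PowerSeries ℚ) = OfNat.ofNat n := by
  rw [← Polynomial.coeToPowerSeries.ringHom_apply, map_ofNat]

private lemma coePS_one : ((1 : Polynomial ℚ) : PowerSeries ℚ) = 1 := Polynomial.coe_one

private lemma coePS_neg (p : Polynomial ℚ) :
    ((-p : Polynomial ℚ) : PowerSeries ℚ) = -(p : PowerSeries ℚ) := by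
  rw [← Polynomial.coeToPowerSeries.ringHom_apply, map_neg,
    Polynomial.coeToPowerSeries.ringHom_apply]

private def IsPolyC (Cs : PowerSeries ℚ) (n : ℕ) (P : PowerSeries ℚ) : Prop :=
  ∃ f : ℕ → Polynomial ℚ,
    P = ∑ j ∈ Finset.range (n + 1), (f j : PowerSeries ℚ) * Cs ^ j

private lemma isPolyC_add {Cs P Q : PowerSeries ℚ} {n : ℕ}
    (hP : IsPolyC Cs n P) (hQ : IsPolyC Cs n Q) : IsPolyC Cs n (P + Q) := by
  obtain ⟨f, hf⟩ := hP
  obtain ⟨g, hg⟩ := hQ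
  refine ⟨fun j => f j + g j, ?_⟩
  simp [hf, hg, add_mul, Finset.sum_add_distrib]

private lemma isPolyC_smul {Cs P : PowerSeries ℚ} {n : ℕ} (c : Polynomial ℚ)
    (hP : IsPolyC Cs n P) : IsPolyC Cs n ((c : PowerSeries ℚ) * P) := by
  obtain ⟨f, hf⟩ := hP
  refine ⟨fun j => c * f j, ?_⟩
  simp [hf, Finset.mul_sum, mul_assoc]

private lemma isPolyC_pow {Cs : PowerSeries ℚ} {n k : ℕ} (hk : k ≤ n) :
    IsPolyC Cs n (Cs ^ k) := by
  refine ⟨fun j => if j = k then 1 else 0, ?_⟩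
  rw [Finset.sum_eq_single k]
  · simp
  · intro b _ hb; simp [hb]
  · intro h; exact absurd (Finset.mem_range.2 (Nat.lt_succ_of_le hk)) h

private lemma isPolyC_zero {Cs : PowerSeries ℚ} {n : ℕ} : IsPolyC Cs n 0 :=
  ⟨fun _ => 0, by simp⟩

private lemma isPolyC_sum {Cs : PowerSeries ℚ} {n : ℕ} {ι : Type*} (s : Finset ι)
    (F : ι → PowerSeries ℚ) (h : ∀ j ∈ s, IsPolyC Cs n (F j)) :
    IsPolyC Cs n (∑ j ∈ s, F j) := by
  classical
  induction s using Finset.induction_on with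
  | empty => simpa using isPolyC_zero
  | insert _ _ hx ih =>
    rw [Finset.sum_insert hx]
    exact isPolyC_add (h _ (Finset.mem_insert_self _ _))
      (ih fun j hj => h j (Finset.mem_insert_of_mem hj))

private lemma isPolyC_deriv {Cs P : PowerSeries ℚ} {i : ℕ}
    (hC : 12 * PowerSeries.X ^ 2 * PowerSeries.derivative ℚ Cs =
      1 + 4 * PowerSeries.X * Cs - Cs ^ 2)
    (hP : IsPolyC Cs i P) :
    IsPolyC Cs (i + 1) (12 * PowerSeries.X ^ 2 * PowerSeries.derivative ℚ P) := by
  obtain ⟨f, hf⟩ := hP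
  subst hf
  rw [map_sum, Finset.mul_sum]
  refine isPolyC_sum _ _ fun j hj => ?_
  have hj' : j ≤ i := Nat.lt_succ_iff.mp (Finset.mem_range.mp hj)
  cases j with
  | zero =>
    have : 12 * PowerSeries.X ^ 2 *
        PowerSeries.derivative ℚ ((f 0 : PowerSeries ℚ) * Cs ^ 0) =
        ((12 * Polynomial.X ^ 2 * Polynomial.derivative (f 0) : Polynomial ℚ) :
          PowerSeries ℚ) * Cs ^ 0 := by
      rw [pow_zero, mul_one, derivative_coe]
      simp only [Polynomial.coe_mul, Polynomial.coe_add, Polynomial.coe_pow, Polynomial.coe_X,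
        coePS_natCast, coePS_ofNat, coePS_one, coePS_neg, Nat.cast_ofNat]
      ring
    rw [this]
    exact isPolyC_smul _ (isPolyC_pow (Nat.zero_le _))
  | succ k =>
    have hk : k + 1 ≤ i := hj'
    have key : 12 * PowerSeries.X ^ 2 *
        PowerSeries.derivative ℚ ((f (k+1) : PowerSeries ℚ) * Cs ^ (k+1)) =
        (((k+1 : Polynomial ℚ) * f (k+1) : Polynomial ℚ) : PowerSeries ℚ) * Cs ^ k
        + (((4*(k+1 : Polynomial ℚ)*Polynomial.X * f (k+1)
            + 12 * Polynomial.X ^ 2 * Polynomial.derivative (f (k+1))) : Polynomial ℚ) :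
            PowerSeries ℚ) * Cs ^ (k+1)
        + (((-(k+1 : Polynomial ℚ)) * f (k+1) : Polynomial ℚ) : PowerSeries ℚ) * Cs ^ (k+2) := by
      rw [Derivation.leibniz, Derivation.leibniz_pow, derivative_coe]
      simp only [smul_eq_mul, nsmul_eq_mul, Nat.add_sub_cancel]
      simp only [Polynomial.coe_mul, Polynomial.coe_add, Polynomial.coe_pow, Polynomial.coe_X,
        coePS_natCast, coePS_ofNat, coePS_one, coePS_neg, Nat.cast_ofNat]
      push_cast
      linear_combination ((k:PowerSeries ℚ)+1) * (f (k+1) : PowerSeries ℚ) * Cs ^ k * hC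
    rw [key]
    exact isPolyC_add (isPolyC_add
      (isPolyC_smul _ (isPolyC_pow (by omega)))
      (isPolyC_smul _ (isPolyC_pow (by omega))))
      (isPolyC_smul _ (isPolyC_pow (by omega)))

private lemma isPolyC_mono {Cs P : PowerSeries ℚ} {n : ℕ}
    (hP : IsPolyC Cs n P) : IsPolyC Cs (n + 1) P := by
  obtain ⟨f, hf⟩ := hP
  refine ⟨fun j => if j < n + 1 then f j else 0, ?_⟩
  rw [hf]
  conv_rhs => rw [Finset.sum_range_succ]
  simp only [lt_self_iff_false, if_false, Polynomial.coe_zero, zero_mul, add_zero]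
  refine Finset.sum_congr rfl fun j hj => ?_
  rw [if_pos (Finset.mem_range.mp hj)]

/-- If `C` satisfies the Riccati equation `12z²C' = 1 + 4zC − C²` and the `Cₙ` are
defined by `C₁ = C`, `C_{i+1} = 12z²·Cᵢ' − 4iz·Cᵢ`, then each `Cₙ` (for `n ≥ 1`) is a
polynomial in `C` of degree at most `n` with coefficients in `ℚ[z]`. -/
theorem C_n_poly (Cs : PowerSeries ℚ)
    (hC : 12 * PowerSeries.X ^ 2 * PowerSeries.derivative ℚ Cs =
      1 + 4 * PowerSeries.X * Cs - Cs ^ 2)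
    (Cn : ℕ → PowerSeries ℚ)
    (h1 : Cn 1 = Cs)
    (hstep : ∀ i : ℕ, 1 ≤ i →
      Cn (i + 1) = 12 * PowerSeries.X ^ 2 * PowerSeries.derivative ℚ (Cn i) -
        4 * (i : PowerSeries ℚ) * PowerSeries.X * Cn i) :
    ∀ n : ℕ, 1 ≤ n → ∃ f : ℕ → Polynomial ℚ,
      Cn n = ∑ j ∈ Finset.range (n + 1), (f j : PowerSeries ℚ) * Cs ^ j := by
  have main : ∀ n : ℕ, 1 ≤ n → IsPolyC Cs n (Cn n) := by
    intro n hn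
    induction n, hn using Nat.le_induction with
    | base =>
      rw [h1]
      have h := isPolyC_pow (Cs := Cs) (le_refl 1)
      rwa [pow_one] at h
    | succ i hi ih =>
      rw [hstep i hi, sub_eq_add_neg]
      refine isPolyC_add (isPolyC_deriv hC ih) ?_
      have : -(4 * (i : PowerSeries ℚ) * PowerSeries.X * Cn i) =
          (((-(4 * (i : Polynomial ℚ) * Polynomial.X)) : Polynomial ℚ) : PowerSeries ℚ) * Cn i := by
        simp only [Polynomial.coe_mul, Polynomial.coe_X, coePS_natCast, coePS_ofNat, coePS_neg, Nat.cast_ofNat]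
        ring
      rw [this]
      exact isPolyC_smul _ (isPolyC_mono ih)
  exact main
end

section
/- The function Σ_{i≥0} ((6i)!/((3i)!(2i)!(2i+1)!!))·(t²/216)^i equals (3/(2t))·sin((2/3)·arcsin(t)) as a power series identity in t. -/
open Nat
open Real


theorem fact_add_six (n : ℕ) : (n+6)! = (n+6)*((n+5)*((n+4)*((n+3)*((n+2)*((n+1)*n !))))) := rfl
theorem fact_add_three (n : ℕ) : (n+3)! = (n+3)*((n+2)*((n+1)*n !)) := rfl
theorem fact_add_two (n : ℕ) : (n+2)! = (n+2)*((n+1)*n !) := rfl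

noncomputable def sineB (i : ℕ) : ℝ :=
  2/3 * (6*i)! / (216^i * (3*i)! * (2*i)! * (2*i+1)‼)

lemma sineB_pos (i : ℕ) : 0 < sineB i := by
  unfold sineB; positivity

lemma sineB_zero : sineB 0 = 2/3 := by
  norm_num [sineB, Nat.doubleFactorial]

lemma sineB_rec (i : ℕ) :
    9*(2*(i:ℝ)+2)*(2*(i:ℝ)+3) * sineB (i+1) = (6*(i:ℝ)+1)*(6*(i:ℝ)+5) * sineB i := by
  unfold sineB
  rw [show 6*(i+1) = 6*i+6 by ring, show 3*(i+1) = 3*i+3 by ring,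
    show 2*(i+1) = 2*i+2 by ring, show 2*i+2+1 = (2*i+1)+2 by ring,
    fact_add_six, fact_add_three, fact_add_two, Nat.doubleFactorial_add_two, pow_succ]
  have h1 : ((6*i)! : ℝ) ≠ 0 := by positivity
  have h2 : ((3*i)! : ℝ) ≠ 0 := by positivity
  have h3 : ((2*i)! : ℝ) ≠ 0 := by positivity
  have h4 : (((2*i+1)‼ : ℕ) : ℝ) ≠ 0 := by positivity
  have h5 : ((216:ℝ)^i) ≠ 0 := by positivity
  push_cast
  field_simp
  ring

lemma sineB_le (i : ℕ) : sineB i ≤ 2/3 := by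
  induction i with
  | zero => exact le_of_eq sineB_zero
  | succ n ih =>
    have h1 := sineB_rec n
    have h2 := sineB_pos n
    have h3 := sineB_pos (n+1)
    have hn : (0:ℝ) ≤ (n:ℝ) := Nat.cast_nonneg n
    nlinarith [mul_nonneg hn hn, mul_nonneg hn (le_of_lt h3)]

lemma summable_sq_geom {x : ℝ} (hx : |x| < 1) :
    Summable (fun i : ℕ => ((i:ℝ)+1)^2 * x^i) := by
  have hx' : ‖x‖ < 1 := by rwa [Real.norm_eq_abs]
  have h2 := summable_pow_mul_geometric_of_norm_lt_one (R := ℝ) 2 hx'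
  have h1 := summable_pow_mul_geometric_of_norm_lt_one (R := ℝ) 1 hx'
  have h0 := summable_pow_mul_geometric_of_norm_lt_one (R := ℝ) 0 hx'
  have := (h2.add ((h1.mul_left 2))).add h0
  exact this.congr (fun i => by push_cast; ring)

noncomputable def sineF (i : ℕ) (θ : ℝ) : ℝ := sineB i * Real.sin θ ^ (2*i+1)
noncomputable def sineF1 (i : ℕ) (θ : ℝ) : ℝ :=
  sineB i * ((2*(i:ℝ)+1) * Real.sin θ ^ (2*i) * Real.cos θ)
noncomputable def sineF2 (i : ℕ) (θ : ℝ) : ℝ :=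
  sineB i * ((2*(i:ℝ)+1) * ((2*(i:ℝ)) * Real.sin θ ^ (2*i-1) * Real.cos θ ^ 2
    - Real.sin θ ^ (2*i+1)))

lemma hasDerivAt_sineF (i : ℕ) (θ : ℝ) : HasDerivAt (sineF i) (sineF1 i θ) θ := by
  have h := ((Real.hasDerivAt_sin θ).pow (2*i+1)).const_mul (sineB i)
  convert h using 1
  any_goals with_reducible_and_instances rfl
  · rfl
  simp only [sineF1, Nat.add_sub_cancel]; push_cast; ring

lemma hasDerivAt_sineF1 (i : ℕ) (θ : ℝ) : HasDerivAt (sineF1 i) (sineF2 i θ) θ := by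
  have hs : HasDerivAt (fun x => Real.sin x ^ (2*i))
      (((2*i : ℕ) : ℝ) * Real.sin θ ^ (2*i-1) * Real.cos θ) θ :=
    (Real.hasDerivAt_sin θ).pow (2*i)
  have hc := Real.hasDerivAt_cos θ
  have h := ((hs.mul hc).const_mul ((2*(i:ℝ)+1))).const_mul (sineB i)
  convert h using 1
  any_goals with_reducible_and_instances rfl
  · funext x; simp only [sineF1, Pi.mul_apply]; ring
  · simp only [sineF2]; push_cast; ring

lemma sineF1_bound {r : ℝ} (hr0 : 0 < r) {θ : ℝ} (hs : |Real.sin θ| ≤ r) (i : ℕ) :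
    ‖sineF1 i θ‖ ≤ 2*((i:ℝ)+1)*(r^2)^i := by
  have hB := sineB_pos i; have hBle := sineB_le i
  have hc := Real.abs_cos_le_one θ
  have h1 : ‖sineF1 i θ‖ = sineB i * ((2*(i:ℝ)+1) * |Real.sin θ|^(2*i) * |Real.cos θ|) := by
    simp only [sineF1, Real.norm_eq_abs, abs_mul, abs_pow, abs_of_pos hB,
      abs_of_nonneg (show (0:ℝ) ≤ 2*(i:ℝ)+1 by positivity)]
  have h2 : |Real.sin θ|^(2*i) ≤ (r^2)^i := by
    calc |Real.sin θ|^(2*i) ≤ r^(2*i) := pow_le_pow_left₀ (abs_nonneg _) hs _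
      _ = (r^2)^i := by rw [← pow_mul]
  rw [h1]
  calc sineB i * ((2*(i:ℝ)+1) * |Real.sin θ|^(2*i) * |Real.cos θ|)
      ≤ (2/3) * ((2*(i:ℝ)+1) * (r^2)^i * 1) := by
        gcongr
      _ ≤ 2*((i:ℝ)+1)*(r^2)^i := by
        have hp : (0:ℝ) ≤ (r^2)^i := by positivity
        nlinarith [Nat.cast_nonneg (α := ℝ) i]

lemma sineF2_bound {r : ℝ} (hr0 : 0 < r) (hr1 : r < 1) {θ : ℝ} (hs : |Real.sin θ| ≤ r) (i : ℕ) :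
    ‖sineF2 i θ‖ ≤ 6/r * (((i:ℝ)+1)^2 * (r^2)^i) := by
  have hB := sineB_pos i; have hBle := sineB_le i
  have hc : |Real.cos θ| ^ 2 ≤ 1 := pow_le_one₀ (abs_nonneg _) (Real.abs_cos_le_one θ)
  have hsp : ∀ n : ℕ, |Real.sin θ| ^ n ≤ r ^ n := fun n => pow_le_pow_left₀ (abs_nonneg _) hs n
  have hr21 : r^(2*i-1) ≤ (r^2)^i / r := by
    cases i with
    | zero =>
      simp only [Nat.mul_zero, Nat.zero_sub, pow_zero]
      rw [le_div_iff₀ hr0]; linarith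
    | succ j =>
      have : (r^2)^(j+1) / r = r^(2*(j+1)-1) := by
        rw [← pow_mul, show 2*(j+1) = (2*(j+1)-1)+1 by omega, pow_succ]
        field_simp
        rw [Nat.add_sub_cancel]
      rw [this]
  have h0 : (0:ℝ) ≤ 2*(i:ℝ) := by positivity
  have hn : (0:ℝ) ≤ |Real.sin θ|^(2*i-1) := by positivity
  have habs : ‖sineF2 i θ‖ ≤ sineB i * ((2*(i:ℝ)+1) * ((2*(i:ℝ)) * r^(2*i-1) + r^(2*i+1))) := by
    have e1 : ‖sineF2 i θ‖ = sineB i * ((2*(i:ℝ)+1) *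
        |(2*(i:ℝ)) * Real.sin θ ^ (2*i-1) * Real.cos θ ^ 2 - Real.sin θ ^ (2*i+1)|) := by
      simp only [sineF2, Real.norm_eq_abs, abs_mul, abs_of_pos hB,
        abs_of_nonneg (show (0:ℝ) ≤ 2*(i:ℝ)+1 by positivity)]
    rw [e1]
    have e2 : |(2*(i:ℝ)) * Real.sin θ ^ (2*i-1) * Real.cos θ ^ 2 - Real.sin θ ^ (2*i+1)|
        ≤ (2*(i:ℝ)) * r^(2*i-1) + r^(2*i+1) := by
      have k1 : (2*(i:ℝ)) * |Real.sin θ|^(2*i-1) * |Real.cos θ|^2 ≤ (2*(i:ℝ)) * r^(2*i-1) := by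
        have k0 : |Real.sin θ|^(2*i-1) * |Real.cos θ|^2 ≤ r^(2*i-1) * 1 :=
          mul_le_mul (hsp _) hc (sq_nonneg _) (pow_nonneg hr0.le _)
        nlinarith
      calc |(2*(i:ℝ)) * Real.sin θ ^ (2*i-1) * Real.cos θ ^ 2 - Real.sin θ ^ (2*i+1)|
          ≤ |(2*(i:ℝ)) * Real.sin θ ^ (2*i-1) * Real.cos θ ^ 2| + |Real.sin θ ^ (2*i+1)| :=
            abs_sub _ _
        _ = (2*(i:ℝ)) * |Real.sin θ|^(2*i-1) * |Real.cos θ|^2 + |Real.sin θ|^(2*i+1) := by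
            rw [abs_mul, abs_mul, abs_pow, abs_pow, abs_pow, abs_of_nonneg h0]
        _ ≤ (2*(i:ℝ)) * r^(2*i-1) + r^(2*i+1) := add_le_add k1 (hsp _)
    gcongr
  have hstep : r^(2*i+1) ≤ r^(2*i-1) := pow_le_pow_of_le_one hr0.le hr1.le (by omega)
  have hx : (0:ℝ) ≤ r^(2*i-1) := by positivity
  calc ‖sineF2 i θ‖ ≤ sineB i * ((2*(i:ℝ)+1) * ((2*(i:ℝ)) * r^(2*i-1) + r^(2*i+1))) := habs
    _ ≤ (2/3) * ((2*(i:ℝ)+1) * ((2*(i:ℝ)+1) * r^(2*i-1))) := by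
        have s1 : (2*(i:ℝ)) * r^(2*i-1) + r^(2*i+1) ≤ (2*(i:ℝ)+1) * r^(2*i-1) := by nlinarith
        have h2 : (0:ℝ) ≤ 2*(i:ℝ)+1 := by positivity
        have inn : (0:ℝ) ≤ (2*(i:ℝ)+1) * ((2*(i:ℝ)) * r^(2*i-1) + r^(2*i+1)) := by positivity
        exact mul_le_mul hBle (by nlinarith [mul_le_mul_of_nonneg_left s1 h2]) inn (by norm_num)
    _ = (2/3) * ((2*(i:ℝ)+1)^2 * r^(2*i-1)) := by ring
    _ ≤ (2/3) * ((9*((i:ℝ)+1)^2) * ((r^2)^i / r)) := by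
        have h4 : (2*(i:ℝ)+1)^2 ≤ 9*((i:ℝ)+1)^2 := by nlinarith [Nat.cast_nonneg (α := ℝ) i]
        gcongr
    _ = 6/r * (((i:ℝ)+1)^2 * (r^2)^i) := by field_simp; ring

lemma sineF_summable {r : ℝ} (hr0 : 0 < r) (hr1 : r < 1) {θ : ℝ} (hs : |Real.sin θ| ≤ r) :
    Summable (fun i => sineF i θ) := by
  have hgeo : Summable (fun i : ℕ => (2/3:ℝ) * (r^2)^i) :=
    (summable_geometric_of_lt_one (by positivity) (by nlinarith)).mul_left _
  refine Summable.of_norm_bounded hgeo (fun i => ?_)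
  have hB := sineB_pos i; have hBle := sineB_le i
  have e1 : ‖sineF i θ‖ = sineB i * |Real.sin θ|^(2*i+1) := by
    simp only [sineF, Real.norm_eq_abs, abs_mul, abs_pow, abs_of_pos hB]
  rw [e1]
  have h2 : |Real.sin θ|^(2*i+1) ≤ (r^2)^i := by
    calc |Real.sin θ|^(2*i+1) ≤ r^(2*i+1) := pow_le_pow_left₀ (abs_nonneg _) hs _
      _ = (r^2)^i * r := by rw [← pow_mul, pow_succ]
      _ ≤ (r^2)^i * 1 := by gcongr
      _ = (r^2)^i := mul_one _
  calc sineB i * |Real.sin θ|^(2*i+1) ≤ (2/3) * (r^2)^i :=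
        mul_le_mul hBle h2 (by positivity) (by norm_num)

lemma sineF2_hasSum {r : ℝ} (hr0 : 0 < r) (hr1 : r < 1) {θ : ℝ} (hs : |Real.sin θ| ≤ r) :
    HasSum (fun i => sineF2 i θ) (-(4/9) * ∑' i, sineF i θ) := by
  have hb : Summable (fun i => sineF i θ) := sineF_summable hr0 hr1 hs
  have hBase : HasSum (fun i => sineF i θ) (∑' i, sineF i θ) := hb.hasSum
  -- the series C i = (2i+1)^2 * sineF i θ
  have hsq : Summable (fun i : ℕ => (2*(i:ℝ)+1)^2 * sineF i θ) := by
    have hgeo : Summable (fun i : ℕ => (6:ℝ) * (((i:ℝ)+1)^2 * (r^2)^i)) := by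
      refine Summable.mul_left _ ?_
      exact summable_sq_geom (by rw [abs_of_nonneg (sq_nonneg r)]; nlinarith)
    refine Summable.of_norm_bounded hgeo (fun i => ?_)
    have hB := sineB_pos i; have hBle := sineB_le i
    have e1 : ‖(2*(i:ℝ)+1)^2 * sineF i θ‖ = (2*(i:ℝ)+1)^2 * (sineB i * |Real.sin θ|^(2*i+1)) := by
      simp only [sineF, Real.norm_eq_abs, abs_mul, abs_pow, abs_of_pos hB,
        abs_of_nonneg (show (0:ℝ) ≤ (2*(i:ℝ)+1)^2 from sq_nonneg _)]
    rw [e1]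
    have h2 : |Real.sin θ|^(2*i+1) ≤ (r^2)^i := by
      calc |Real.sin θ|^(2*i+1) ≤ r^(2*i+1) := pow_le_pow_left₀ (abs_nonneg _) hs _
        _ = (r^2)^i * r := by rw [← pow_mul, pow_succ]
        _ ≤ (r^2)^i * 1 := by gcongr
        _ = (r^2)^i := mul_one _
    have h3 : sineB i * |Real.sin θ|^(2*i+1) ≤ (2/3) * (r^2)^i :=
      mul_le_mul hBle h2 (by positivity) (by norm_num)
    have h4 : (2*(i:ℝ)+1)^2 ≤ 9*((i:ℝ)+1)^2 := by nlinarith [Nat.cast_nonneg (α := ℝ) i]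
    calc (2*(i:ℝ)+1)^2 * (sineB i * |Real.sin θ|^(2*i+1))
        ≤ (9*((i:ℝ)+1)^2) * ((2/3) * (r^2)^i) :=
          mul_le_mul h4 h3 (by positivity) (by positivity)
      _ = 6 * (((i:ℝ)+1)^2 * (r^2)^i) := by ring
  have hC : HasSum (fun i : ℕ => (2*(i:ℝ)+1)^2 * sineF i θ)
      (∑' i : ℕ, (2*(i:ℝ)+1)^2 * sineF i θ) := hsq.hasSum
  set S : ℝ := ∑' i, sineF i θ with hS
  set SC : ℝ := ∑' i : ℕ, (2*(i:ℝ)+1)^2 * sineF i θ with hSC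
  have hA1 : HasSum (fun i : ℕ => ((2*(i:ℝ)+1)^2 - 4/9) * sineF i θ) (SC - 4/9 * S) := by
    have h := hC.sub (hBase.mul_left (4/9))
    have he : (fun b : ℕ => (2*(b:ℝ)+1)^2 * sineF b θ - 4/9 * sineF b θ)
        = fun i : ℕ => ((2*(i:ℝ)+1)^2 - 4/9) * sineF i θ := by funext b; ring
    rwa [he] at h
  have hA1' : HasSum (fun i : ℕ => sineB (i+1) * ((2*((i:ℝ)+1)+1) * (2*((i:ℝ)+1))
      * Real.sin θ ^ (2*(i+1)-1))) (SC - 4/9*S) := by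
    have he : (fun i : ℕ => ((2*(i:ℝ)+1)^2 - 4/9) * sineF i θ)
        = fun i : ℕ => sineB (i+1) * ((2*((i:ℝ)+1)+1) * (2*((i:ℝ)+1)) * Real.sin θ ^ (2*(i+1)-1)) := by
      funext i
      have hrec := sineB_rec i
      rw [show 2*(i+1)-1 = 2*i+1 by omega]
      simp only [sineF]
      linear_combination (-(Real.sin θ ^ (2*i+1)) / 9) * hrec
    rwa [he] at hA1
  have hA : HasSum (fun i : ℕ => sineB i * ((2*(i:ℝ)+1) * (2*(i:ℝ))
      * Real.sin θ ^ (2*i-1))) (SC - 4/9*S) := by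
    have h : HasSum (fun i : ℕ => sineB i * ((2*(i:ℝ)+1) * (2*(i:ℝ)) * Real.sin θ ^ (2*i-1)))
        ((SC - 4/9*S) + ∑ i ∈ Finset.range 1,
          sineB i * ((2*(i:ℝ)+1) * (2*(i:ℝ)) * Real.sin θ ^ (2*i-1))) := by
      refine (hasSum_nat_add_iff 1).mp ?_
      have he2 : (fun n : ℕ => sineB (n+1) * ((2*((n+1:ℕ):ℝ)+1) * (2*((n+1:ℕ):ℝ))
          * Real.sin θ ^ (2*(n+1)-1)))
          = fun i : ℕ => sineB (i+1) * ((2*((i:ℝ)+1)+1) * (2*((i:ℝ)+1)) * Real.sin θ ^ (2*(i+1)-1)) := by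
        funext n; push_cast; ring
      rw [he2]
      exact hA1'
    simpa using h
  have hcomb := hA.sub hC
  have hfe : (fun i : ℕ => sineB i * ((2*(i:ℝ)+1) * (2*(i:ℝ)) * Real.sin θ ^ (2*i-1))
      - (2*(i:ℝ)+1)^2 * sineF i θ) = fun i : ℕ => sineF2 i θ := by
    funext i
    simp only [sineF, sineF2, Real.cos_sq']
    cases i with
    | zero => norm_num
    | succ j =>
      rw [show 2*(j+1)-1 = 2*j+1 by omega, show 2*(j+1)+1 = (2*j+1)+2 by omega]
      push_cast
      ring
  rw [hfe] at hcomb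
  have hval : SC - 4/9*S - SC = -(4/9) * S := by ring
  rwa [hval] at hcomb


/-- `Σ_{i≥0} ((6i)!/((3i)!(2i)!(2i+1)!!))·(t²/216)^i = (3/(2t))·sin((2/3)·arcsin t)`
for `|t| < 1`, with the right side extended to `t = 0` by its limit `1`. -/
theorem sine_identity (t : ℝ) (ht : |t| < 1) :
    HasSum
      (fun i : ℕ =>
        ((6 * i).factorial : ℝ) /
            (((3 * i).factorial : ℝ) * ((2 * i).factorial : ℝ) * ((2 * i + 1)‼ : ℝ)) *
          (t ^ 2 / 216) ^ i)
      (if t = 0 then 1 else 3 / (2 * t) * Real.sin (2 / 3 * Real.arcsin t)) := by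
  by_cases ht0 : t = 0
  · subst ht0
    rw [if_pos rfl]
    have h := hasSum_single (f := fun i : ℕ =>
        ((6 * i).factorial : ℝ) /
            (((3 * i).factorial : ℝ) * ((2 * i).factorial : ℝ) * ((2 * i + 1)‼ : ℝ)) *
          ((0:ℝ) ^ 2 / 216) ^ i) 0
      (fun b hb => by norm_num [zero_pow hb])
    convert h using 1
    norm_num [Nat.doubleFactorial]
  · rw [if_neg ht0]
    obtain ⟨ht1', ht2'⟩ := abs_lt.mp ht
    have ht1 : -1 ≤ t := ht1'.le
    have ht2 : t ≤ 1 := ht2'.le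
    set r : ℝ := (1 + |t|)/2 with hrdef
    have habs : 0 ≤ |t| := abs_nonneg t
    have hr0 : 0 < r := by rw [hrdef]; positivity
    have hrt : |t| < r := by rw [hrdef]; linarith
    have hr1 : r < 1 := by rw [hrdef]; linarith
    have hr_le1 : r ≤ 1 := hr1.le
    set θr := Real.arcsin r with hθrdef
    have hθrpos : 0 < θr := Real.arcsin_pos.mpr hr0
    have hθr2 : θr ≤ π/2 := Real.arcsin_le_pi_div_two r
    have hs_open : IsOpen (Set.Ioo (-θr) θr) := isOpen_Ioo
    have hs_conn : IsPreconnected (Set.Ioo (-θr) θr) := isPreconnected_Ioo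
    have h0s : (0:ℝ) ∈ Set.Ioo (-θr) θr := ⟨by linarith, hθrpos⟩
    have hsin : ∀ θ ∈ Set.Ioo (-θr) θr, |Real.sin θ| ≤ r := by
      intro θ hθ
      obtain ⟨h1, h2⟩ := hθ
      have hm := Real.strictMonoOn_sin.monotoneOn
      have hmem : θ ∈ Set.Icc (-(π/2)) (π/2) := ⟨by linarith, by linarith⟩
      have hmemr : θr ∈ Set.Icc (-(π/2)) (π/2) := ⟨by linarith, hθr2⟩
      have hmemr' : -θr ∈ Set.Icc (-(π/2)) (π/2) := ⟨by linarith, by linarith⟩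
      have e : Real.sin θr = r := Real.sin_arcsin (by linarith) hr_le1
      have hup : Real.sin θ ≤ r := by rw [← e]; exact hm hmem hmemr h2.le
      have hlo : -r ≤ Real.sin θ := by
        have := hm hmemr' hmem h1.le
        rwa [Real.sin_neg, e] at this
      exact abs_le.mpr ⟨hlo, hup⟩
    have hx2 : |r^2| < 1 := by rw [abs_of_nonneg (sq_nonneg r)]; nlinarith
    have hu1 : Summable (fun i : ℕ => 2*((i:ℝ)+1)*(r^2)^i) := by
      have h := (summable_sq_geom hx2).mul_left 2
      refine Summable.of_nonneg_of_le (fun i => by positivity) (fun i => ?_) h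
      have h1 : ((i:ℝ)+1) ≤ ((i:ℝ)+1)^2 := by nlinarith [Nat.cast_nonneg (α := ℝ) i]
      have hp : (0:ℝ) ≤ (r^2)^i := by positivity
      nlinarith
    have hu2 : Summable (fun i : ℕ => 6/r * (((i:ℝ)+1)^2 * (r^2)^i)) :=
      (summable_sq_geom hx2).mul_left _
    have hb0 : Summable (fun i => sineF i 0) := by
      have he : (fun i : ℕ => sineF i 0) = fun _ => 0 := by
        funext i; simp [sineF]
      rw [he]; exact summable_zero
    have hdF : ∀ θ ∈ Set.Ioo (-θr) θr,
        HasDerivAt (fun z => ∑' i, sineF i z) (∑' i, sineF1 i θ) θ := by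
      intro θ hθ
      exact hasDerivAt_tsum_of_isPreconnected hu1 hs_open hs_conn
        (fun i y _ => hasDerivAt_sineF i y) (fun i y hy => sineF1_bound hr0 (hsin y hy) i)
        h0s hb0 hθ
    have hb1 : Summable (fun i => sineF1 i 0) :=
      Summable.of_norm_bounded hu1 (fun i => sineF1_bound hr0 (hsin 0 h0s) i)
    have hdF1 : ∀ θ ∈ Set.Ioo (-θr) θr,
        HasDerivAt (fun z => ∑' i, sineF1 i z) (∑' i, sineF2 i θ) θ := by
      intro θ hθ
      exact hasDerivAt_tsum_of_isPreconnected hu2 hs_open hs_conn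
        (fun i y _ => hasDerivAt_sineF1 i y) (fun i y hy => sineF2_bound hr0 hr1 (hsin y hy) i)
        h0s hb1 hθ
    have hsum2 : ∀ θ ∈ Set.Ioo (-θr) θr,
        (∑' i, sineF2 i θ) = -(4/9) * ∑' i, sineF i θ := fun θ hθ =>
      (sineF2_hasSum hr0 hr1 (hsin θ hθ)).tsum_eq
    have hψ : ∀ θ : ℝ, HasDerivAt (fun z => Real.sin (2/3*z)) (2/3 * Real.cos (2/3*θ)) θ := by
      intro θ
      have h1 : HasDerivAt (fun z : ℝ => 2/3*z) (2/3) θ := by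
        simpa using (hasDerivAt_id θ).const_mul (2/3 : ℝ)
      have h4 := (Real.hasDerivAt_sin (2/3*θ)).comp θ h1
      have h5 : HasDerivAt (fun z : ℝ => Real.sin (2/3*z)) (Real.cos (2/3*θ) * (2/3)) θ := h4
      convert h5 using 1
      ring
    have hψ1 : ∀ θ : ℝ, HasDerivAt (fun z => 2/3 * Real.cos (2/3*z))
        (-(4/9) * Real.sin (2/3*θ)) θ := by
      intro θ
      have h1 : HasDerivAt (fun z : ℝ => 2/3*z) (2/3) θ := by
        simpa using (hasDerivAt_id θ).const_mul (2/3 : ℝ)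
      have h4 := (Real.hasDerivAt_cos (2/3*θ)).comp θ h1
      have h5 : HasDerivAt (fun z : ℝ => Real.cos (2/3*z)) (-Real.sin (2/3*θ) * (2/3)) θ := h4
      have h6 := h5.const_mul (2/3 : ℝ)
      convert h6 using 1
      any_goals with_reducible_and_instances rfl
      ring
    have hdφ : ∀ θ ∈ Set.Ioo (-θr) θr,
        HasDerivAt (fun z => (∑' i, sineF i z) - Real.sin (2/3*z))
          ((∑' i, sineF1 i θ) - 2/3 * Real.cos (2/3*θ)) θ :=
      fun θ hθ => (hdF θ hθ).sub (hψ θ)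
    have hdφ1 : ∀ θ ∈ Set.Ioo (-θr) θr,
        HasDerivAt (fun z => (∑' i, sineF1 i z) - 2/3 * Real.cos (2/3*z))
          (-(4/9) * ((∑' i, sineF i θ) - Real.sin (2/3*θ))) θ := by
      intro θ hθ
      have h2 := (hdF1 θ hθ).sub (hψ1 θ)
      rw [hsum2 θ hθ] at h2
      convert h2 using 1
      any_goals with_reducible_and_instances rfl
      ring
    have hdE : ∀ θ ∈ Set.Ioo (-θr) θr,
        HasDerivAt (fun z => 4/9 * ((∑' i, sineF i z) - Real.sin (2/3*z))^2
          + ((∑' i, sineF1 i z) - 2/3 * Real.cos (2/3*z))^2) 0 θ := by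
      intro θ hθ
      have h1 := (((hdφ θ hθ).pow 2).const_mul (4/9 : ℝ)).add ((hdφ1 θ hθ).pow 2)
      convert h1 using 1
      any_goals with_reducible_and_instances rfl
      push_cast
      ring
    set θ0 := Real.arcsin t with hθ0def
    have hθ0s : θ0 ∈ Set.Ioo (-θr) θr := by
      constructor
      · rw [show -θr = Real.arcsin (-r) by rw [Real.arcsin_neg]]
        exact Real.strictMonoOn_arcsin ⟨by linarith, by linarith⟩ ⟨ht1, ht2⟩
          (by linarith [(abs_lt.mp hrt).1])
      · exact Real.strictMonoOn_arcsin ⟨ht1, ht2⟩ ⟨by linarith, hr_le1⟩ (abs_lt.mp hrt).2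
    have hseg : Set.Icc (min 0 θ0) (max 0 θ0) ⊆ Set.Ioo (-θr) θr := by
      rintro x ⟨hx1, hx2⟩
      obtain ⟨ha, hb⟩ := hθ0s
      constructor
      · have h1 : -θr < min 0 θ0 := lt_min (by linarith) ha
        linarith
      · have h1 : max 0 θ0 < θr := max_lt hθrpos hb
        linarith
    have hconst := constant_of_has_deriv_right_zero
      (f := fun z => 4/9 * ((∑' i, sineF i z) - Real.sin (2/3*z))^2
          + ((∑' i, sineF1 i z) - 2/3 * Real.cos (2/3*z))^2)
      (a := min 0 θ0) (b := max 0 θ0)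
      (fun x hx => ((hdE x (hseg hx)).continuousAt).continuousWithinAt)
      (fun x hx => ((hdE x (hseg (Set.Ico_subset_Icc_self hx))).hasDerivWithinAt))
    have h0mem : (0:ℝ) ∈ Set.Icc (min 0 θ0) (max 0 θ0) := ⟨min_le_left _ _, le_max_left _ _⟩
    have hθ0mem : θ0 ∈ Set.Icc (min 0 θ0) (max 0 θ0) := ⟨min_le_right _ _, le_max_right _ _⟩
    have hH0 : (∑' i, sineF i 0) = 0 := by
      have : ∀ i : ℕ, sineF i 0 = 0 := fun i => by simp [sineF]
      rw [tsum_congr this, tsum_zero]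
    have hH1_0 : (∑' i, sineF1 i 0) = 2/3 := by
      have h1 : (∑' i, sineF1 i 0) = sineF1 0 0 :=
        tsum_eq_single 0 (fun i hi => by
          simp [sineF1, Real.sin_zero, zero_pow (show 2*i ≠ 0 by omega)])
      rw [h1]
      simp [sineF1, sineB_zero]
    have hE0 : (4/9 * ((∑' i, sineF i (0:ℝ)) - Real.sin (2/3*0))^2
          + ((∑' i, sineF1 i (0:ℝ)) - 2/3 * Real.cos (2/3*0))^2) = 0 := by
      rw [hH0, hH1_0]
      norm_num
    have hEθ0 : (4/9 * ((∑' i, sineF i θ0) - Real.sin (2/3*θ0))^2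
          + ((∑' i, sineF1 i θ0) - 2/3 * Real.cos (2/3*θ0))^2) = 0 := by
      have h1 := hconst θ0 hθ0mem
      have h2 := hconst 0 h0mem
      rw [hE0] at h2
      rw [h1, ← h2]
    have hkey : (∑' i, sineF i θ0) = Real.sin (2/3 * θ0) := by
      nlinarith [sq_nonneg ((∑' i, sineF i θ0) - Real.sin (2/3*θ0)),
        sq_nonneg ((∑' i, sineF1 i θ0) - 2/3 * Real.cos (2/3*θ0))]
    have hsummable := sineF_summable hr0 hr1 (hsin θ0 hθ0s)
    have hsum : HasSum (fun i => sineF i θ0) (Real.sin (2/3 * θ0)) := by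
      have h1 := hsummable.hasSum
      rwa [hkey] at h1
    have hsint : Real.sin θ0 = t := Real.sin_arcsin ht1 ht2
    have hsum' : HasSum (fun i : ℕ => sineB i * t^(2*i+1)) (Real.sin (2/3 * Real.arcsin t)) := by
      have h1 : (fun i : ℕ => sineF i θ0) = fun i : ℕ => sineB i * t^(2*i+1) := by
        funext i; rw [sineF, hsint]
      rwa [h1, hθ0def] at hsum
    have hm := hsum'.mul_left (3/(2*t))
    have hfe : (fun i : ℕ => 3/(2*t) * (sineB i * t^(2*i+1)))
        = fun i : ℕ => ((6 * i).factorial : ℝ) /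
            (((3 * i).factorial : ℝ) * ((2 * i).factorial : ℝ) * ((2 * i + 1)‼ : ℝ)) *
          (t ^ 2 / 216) ^ i := by
      funext i
      rw [sineB]
      have e : (t^2/216 : ℝ)^i = t^(2*i)/216^i := by rw [div_pow, ← pow_mul]
      rw [e, pow_succ]
      have n1 : ((6*i)! : ℝ) ≠ 0 := by positivity
      have n2 : ((3*i)! : ℝ) ≠ 0 := by positivity
      have n3 : ((2*i)! : ℝ) ≠ 0 := by positivity
      have n4 : (((2*i+1)‼ : ℕ) : ℝ) ≠ 0 := by positivity
      have n5 : ((216:ℝ)^i) ≠ 0 := by positivity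
      field_simp
    rw [hfe] at hm
    exact hm
end
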